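/- arXiv:1006.2758 — 7 statements merged into one kernel-verified Lean document; each statement's English description precedes it below -/
import Mathlib

section
/- As ρ → ∞, the gap between the benchmark rate and the equal-power ZFDPC-SUS sum rate satisfies C(ρ) − R_DPC(ρ) = (1/(ρ ln 2)) · Σ_{i=1}^{M} κ_i/(λ_i |l_{i,i}|²) + O(ρ^{-2}); that is, the function ρ ↦ ρ² · ( C(ρ) − R_DPC(ρ) − (1/(ρ ln 2)) Σ_{i=1}^{M} κ_i/(λ_i |l_{i,i}|²) ) is bounded as ρ → ∞. -/
open Matrix Filter Finset MeasureTheory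

/-- The benchmark rate `C(ρ) = log₂ det(I + ρ C Cᴴ)` with `C = Λ^{1/2} L Q`. -/
noncomputable def benchRate (M m : ℕ) (lam : Fin M → ℝ)
    (L : Matrix (Fin M) (Fin M) ℂ) (Q : Matrix (Fin M) (Fin m) ℂ) (ρ : ℝ) : ℝ :=
  Real.logb 2
    (((1 : Matrix (Fin M) (Fin M) ℂ) +
      (ρ : ℂ) • ((Matrix.diagonal (fun i => (Real.sqrt (lam i) : ℂ)) * L * Q) *
        (Matrix.diagonal (fun i => (Real.sqrt (lam i) : ℂ)) * L * Q)ᴴ)).det).re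

/-- The equal-power ZFDPC-SUS sum rate `R_DPC(ρ) = Σ_i log₂(1 + ρ λ_i |l_{i,i}|²)`. -/
noncomputable def rateDPC (M : ℕ) (lam : Fin M → ℝ)
    (L : Matrix (Fin M) (Fin M) ℂ) (ρ : ℝ) : ℝ :=
  ∑ i, Real.logb 2 (1 + ρ * lam i * Complex.normSq (L i i))

/-- `κ_i = Σ_{j>i} |t_{j,i}|²/|t_{i,i}|²` where `T = L⁻¹`. -/
noncomputable def kappa (M : ℕ) (L : Matrix (Fin M) (Fin M) ℂ) (i : Fin M) : ℝ :=
  ∑ j ∈ Finset.univ.filter (fun j => i < j),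
    Complex.normSq (L⁻¹ j i) / Complex.normSq (L⁻¹ i i)

lemma myLogBound {u : ℝ} (h : |u| ≤ 1/2) : |Real.log (1+u) - u| ≤ 2*u^2 := by
  have h1 : |(-u)| < 1 := by rw [abs_neg]; linarith [abs_nonneg u]
  have key := Real.abs_log_sub_add_sum_range_le h1 1
  simp only [Finset.range_one, Finset.sum_singleton, pow_one, Nat.cast_zero, zero_add,
    Nat.cast_one, div_one, abs_neg, sub_neg_eq_add] at key
  have h3 : |Real.log (1+u) - u| = |-u + Real.log (1 + u)| := by
    rw [abs_sub_comm, ← abs_neg]; ring_nf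
  rw [h3]
  refine key.trans ?_
  have h4 : (1:ℝ)/2 ≤ 1 - |u| := by linarith
  calc |u| ^ (1+1) / (1 - |u|) ≤ |u|^(1+1) / (1/2) :=
        div_le_div_of_nonneg_left (by positivity) (by norm_num) h4
    _ = 2 * u^2 := by rw [← sq_abs u]; ring

/-- Core log-linearization lemma. -/
lemma myCore (a τ : ℝ) (ha : 0 < a) (g : ℝ → ℝ) (R : ℝ)
    (hg : ∀ x ∈ Set.Icc (0:ℝ) 1, |g x| ≤ R) :
    ∃ ε > 0, ∃ B, ∀ x ∈ Set.Ioc (0:ℝ) ε,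
      0 < a*(1 + τ*x + g x * x^2) ∧
      |Real.log (a*(1 + τ*x + g x * x^2)) - Real.log a - τ*x| ≤ B*x^2 := by
  have hR : 0 ≤ R := le_trans (abs_nonneg _) (hg 0 (by norm_num))
  set K := |τ| + R with hK
  have hK0 : 0 ≤ K := by positivity
  refine ⟨min 1 (1/(2*(K+1))), lt_min one_pos (by positivity), 2*K^2 + R, ?_⟩
  rintro x ⟨hx0, hxe⟩
  have hx1 : x ≤ 1 := hxe.trans (min_le_left _ _)
  have hx2 : x ≤ 1/(2*(K+1)) := hxe.trans (min_le_right _ _)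
  have hgx : |g x| ≤ R := hg x ⟨hx0.le, hx1⟩
  set u := τ*x + g x * x^2 with hu
  have hxsq : x^2 ≤ x := by nlinarith
  have e1 : |τ*x| = |τ| * x := by rw [abs_mul, abs_of_pos hx0]
  have e2 : |g x * x^2| = |g x| * x^2 := by rw [abs_mul, abs_of_nonneg (sq_nonneg x)]
  have hub : |u| ≤ K * x := by
    refine (abs_add_le _ _).trans ?_
    rw [e1, e2]
    nlinarith [abs_nonneg (g x), abs_nonneg τ]
  have huhalf : |u| ≤ 1/2 := by
    refine hub.trans ?_
    have hx2' : x * (2*(K+1)) ≤ 1 := by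
      rw [le_div_iff₀ (by positivity : (0:ℝ) < 2*(K+1))] at hx2
      linarith
    nlinarith
  have hu1 : 0 < 1 + u := by
    have : -(1/2) ≤ u := neg_le_of_abs_le huhalf
    linarith
  have hf : 0 < a * (1 + τ*x + g x * x^2) := by
    have h : (1:ℝ) + τ*x + g x * x^2 = 1 + u := by rw [hu]; ring
    rw [h]; exact mul_pos ha hu1
  refine ⟨hf, ?_⟩
  have heq : a * (1 + τ*x + g x * x^2) = a * (1+u) := by rw [hu]; ring
  rw [heq, Real.log_mul ha.ne' hu1.ne']
  have hlog := myLogBound huhalf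
  have h : Real.log a + Real.log (1+u) - Real.log a - τ*x
      = (Real.log (1+u) - u) + g x * x^2 := by rw [hu]; ring
  rw [h]
  calc |(Real.log (1+u) - u) + g x * x^2| ≤ |Real.log (1+u) - u| + |g x * x^2| := abs_add_le _ _
    _ ≤ 2*u^2 + R * x^2 := by
        refine add_le_add hlog ?_
        rw [e2]
        nlinarith
    _ ≤ 2*(K*x)^2 + R*x^2 := by
        have := sq_le_sq' (neg_le_of_abs_le hub) (le_of_abs_le hub)
        nlinarith
    _ = (2*K^2 + R) * x^2 := by ring

set_option maxHeartbeats 1200000 in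
/-- High-SNR gap for ZFDPC-SUS:
`C(ρ) − R_DPC(ρ) = (1/(ρ ln 2)) Σ_i κ_i/(λ_i |l_{i,i}|²) + O(ρ⁻²)` as `ρ → ∞`. -/
theorem highSNR_gap_ZFDPC
    (M m : ℕ) (hM : 1 ≤ M) (hm : M ≤ m)
    (lam : Fin M → ℝ) (hlam : ∀ i, 0 < lam i)
    (L : Matrix (Fin M) (Fin M) ℂ)
    (hLtri : ∀ i j : Fin M, i < j → L i j = 0)
    (hLdiag : ∀ i : Fin M, L i i ≠ 0)
    (Q : Matrix (Fin M) (Fin m) ℂ) (hQ : Q * Qᴴ = 1) :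
    ∃ B : ℝ, ∀ᶠ ρ : ℝ in atTop,
      |ρ ^ 2 * (benchRate M m lam L Q ρ - rateDPC M lam L ρ -
        (1 / (ρ * Real.log 2)) *
          ∑ i, kappa M L i / (lam i * Complex.normSq (L i i)))| ≤ B := by
  classical
  set G : Matrix (Fin M) (Fin M) ℂ := Matrix.diagonal (fun i => (Real.sqrt (lam i) : ℂ)) * L
    with hG
  -- triangularity
  have hbt : L.BlockTriangular (OrderDual.toDual : Fin M → (Fin M)ᵒᵈ) := by
    intro i j h
    exact hLtri i j (by exact_mod_cast h)
  have detL : L.det = ∏ i, L i i := Matrix.det_of_lowerTriangular L hbt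
  have hLunit : IsUnit L.det := by
    rw [detL]
    exact (Finset.prod_ne_zero_iff.mpr fun i _ => hLdiag i).isUnit
  haveI : Invertible L := L.invertibleOfIsUnitDet hLunit
  have hTbt : (L⁻¹).BlockTriangular (OrderDual.toDual : Fin M → (Fin M)ᵒᵈ) :=
    Matrix.blockTriangular_inv_of_blockTriangular hbt
  have hTtri : ∀ i j : Fin M, i < j → L⁻¹ i j = 0 := fun i j h => hTbt (by exact_mod_cast h)
  have hLT : L * L⁻¹ = 1 := Matrix.mul_nonsing_inv L hLunit
  have hTd : ∀ j, L j j * L⁻¹ j j = 1 := by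
    intro j
    have h1 : (L * L⁻¹) j j = (1 : Matrix (Fin M) (Fin M) ℂ) j j := by rw [hLT]
    rw [Matrix.mul_apply, Matrix.one_apply_eq] at h1
    have h2 : ∑ k, L j k * L⁻¹ k j = L j j * L⁻¹ j j := by
      refine Finset.sum_eq_single_of_mem j (Finset.mem_univ j) (fun k _ hk => ?_)
      rcases lt_or_gt_of_ne hk with h | h
      · rw [hTtri k j h, mul_zero]
      · rw [hLtri j k h, zero_mul]
    rw [h2] at h1
    exact h1
  have nTd : ∀ j, Complex.normSq (L⁻¹ j j) = (Complex.normSq (L j j))⁻¹ := by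
    intro j
    have h2 := congrArg Complex.normSq (hTd j)
    rw [_root_.map_mul, _root_.map_one] at h2
    exact (inv_eq_of_mul_eq_one_right h2).symm
  -- G facts
  set d : Fin M → ℝ := fun i => lam i * Complex.normSq (L i i) with hd
  have hdpos : ∀ i, 0 < d i := fun i =>
    mul_pos (hlam i) (Complex.normSq_pos.mpr (hLdiag i))
  set a : ℝ := ∏ i, d i with ha
  have hapos : 0 < a := Finset.prod_pos fun i _ => hdpos i
  have hsq : ∀ i, ((Real.sqrt (lam i) : ℂ)) ≠ 0 := by
    intro i
    simp only [ne_eq, Complex.ofReal_eq_zero]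
    exact (Real.sqrt_pos.mpr (hlam i)).ne'
  have hdetG : G.det = (∏ i, (Real.sqrt (lam i) : ℂ)) * ∏ i, L i i := by
    rw [hG, Matrix.det_mul, Matrix.det_diagonal, detL]
  have hGunit : IsUnit G.det := by
    rw [hdetG]
    exact (mul_ne_zero (Finset.prod_ne_zero_iff.mpr fun i _ => hsq i)
      (Finset.prod_ne_zero_iff.mpr fun i _ => hLdiag i)).isUnit
  have hGinv : G⁻¹ = L⁻¹ * Matrix.diagonal (fun i => ((Real.sqrt (lam i))⁻¹ : ℂ)) := by
    refine Matrix.inv_eq_right_inv ?_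
    rw [hG, Matrix.mul_assoc, ← Matrix.mul_assoc L, hLT, Matrix.one_mul,
      Matrix.diagonal_mul_diagonal]
    have h1 : (fun i => (Real.sqrt (lam i) : ℂ) * ((Real.sqrt (lam i) : ℂ))⁻¹)
        = fun _ => (1:ℂ) := funext fun i => mul_inv_cancel₀ (hsq i)
    rw [h1, Matrix.diagonal_one]
  have hnormdetG : Complex.normSq G.det = a := by
    rw [hdetG, _root_.map_mul, map_prod Complex.normSq, map_prod Complex.normSq,
      ← Finset.prod_mul_distrib, ha]
    refine Finset.prod_congr rfl fun i _ => ?_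
    rw [Complex.normSq_ofReal, Real.mul_self_sqrt (hlam i).le, hd]
  set τ : ℝ := ∑ i, ∑ j, Complex.normSq (G⁻¹ i j) with hτdef
  have htr : (G⁻¹ * (G⁻¹)ᴴ).trace = (τ : ℂ) := by
    rw [Matrix.trace, hτdef]
    push_cast
    refine Finset.sum_congr rfl fun i _ => ?_
    rw [Matrix.diag_apply, Matrix.mul_apply]
    refine Finset.sum_congr rfl fun j _ => ?_
    rw [Matrix.conjTranspose_apply]
    simpa using Complex.mul_conj (G⁻¹ i j)
  have hGG : ∀ x : ℝ, ((x:ℂ) • (1 : Matrix (Fin M) (Fin M) ℂ) + G * Gᴴ)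
      = G * (1 + (x:ℂ) • (G⁻¹ * (G⁻¹)ᴴ)) * Gᴴ := by
    intro x
    have h1 : G * (G⁻¹ * (G⁻¹)ᴴ) * Gᴴ = 1 := by
      rw [← Matrix.mul_assoc, Matrix.mul_nonsing_inv G hGunit, Matrix.one_mul,
        ← Matrix.conjTranspose_mul, Matrix.mul_nonsing_inv G hGunit, Matrix.conjTranspose_one]
    calc (x:ℂ) • (1 : Matrix (Fin M) (Fin M) ℂ) + G * Gᴴ
        = (x:ℂ) • (G * (G⁻¹ * (G⁻¹)ᴴ) * Gᴴ) + G * Gᴴ := by rw [h1]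
      _ = G * (1 + (x:ℂ) • (G⁻¹ * (G⁻¹)ᴴ)) * Gᴴ := by
          simp only [Matrix.mul_add, Matrix.add_mul, Matrix.mul_one, Matrix.one_mul,
            Matrix.mul_smul, Matrix.smul_mul]
          rw [add_comm]
  set pol : Polynomial ℂ :=
    (1 + (Polynomial.X : Polynomial ℂ) • (G⁻¹ * (G⁻¹)ᴴ).map ⇑Polynomial.C).det.divX.divX
    with hpol
  set gre : ℝ → ℝ := fun x => (Polynomial.eval (x:ℂ) pol).re with hgre
  have hdet : ∀ x : ℝ, (((x:ℂ) • (1 : Matrix (Fin M) (Fin M) ℂ) + G * Gᴴ).det).re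
      = a * (1 + τ*x + gre x * x^2) := by
    intro x
    rw [hGG x, Matrix.det_mul, Matrix.det_mul, Matrix.det_one_add_smul, htr,
      Matrix.det_conjTranspose]
    have h2 : G.det * (1 + (τ:ℂ) * (x:ℂ) + pol.eval (x:ℂ) * (x:ℂ)^2) * star G.det
        = ((a:ℝ):ℂ) * (1 + (τ:ℂ) * (x:ℂ) + pol.eval (x:ℂ) * (x:ℂ)^2) := by
      have h3 : G.det * star G.det = ((a:ℝ):ℂ) := by
        rw [Complex.star_def, Complex.mul_conj, hnormdetG]
      calc G.det * (1 + (τ:ℂ) * (x:ℂ) + pol.eval (x:ℂ) * (x:ℂ)^2) * star G.det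
          = (G.det * star G.det) * (1 + (τ:ℂ) * (x:ℂ) + pol.eval (x:ℂ) * (x:ℂ)^2) := by ring
        _ = ((a:ℝ):ℂ) * (1 + (τ:ℂ) * (x:ℂ) + pol.eval (x:ℂ) * (x:ℂ)^2) := by rw [h3]
    rw [h2]
    have h4 : ((a:ℝ):ℂ) * (1 + (τ:ℂ) * (x:ℂ) + pol.eval (x:ℂ) * (x:ℂ)^2)
        = ((a*(1+τ*x) : ℝ) : ℂ) + ((a*x^2 : ℝ):ℂ) * pol.eval (x:ℂ) := by
      push_cast
      ring
    rw [h4, Complex.add_re, Complex.ofReal_re, Complex.re_ofReal_mul, hgre]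
    ring
  -- the kappa identity
  have hTnz : ∀ j, Complex.normSq (L⁻¹ j j) ≠ 0 := fun j => by
    rw [nTd j]
    exact inv_ne_zero (Complex.normSq_pos.mpr (hLdiag j)).ne'
  have hentry : ∀ i j, Complex.normSq (G⁻¹ i j)
      = Complex.normSq (L⁻¹ i j) * (lam j)⁻¹ := by
    intro i j
    rw [hGinv, Matrix.mul_diagonal, _root_.map_mul, map_inv₀, Complex.normSq_ofReal,
      Real.mul_self_sqrt (hlam j).le]
  have hcol : ∀ j, ∑ i, Complex.normSq (L⁻¹ i j)
      = (Complex.normSq (L j j))⁻¹ * (1 + kappa M L j) := by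
    intro j
    rw [← Finset.sum_filter_add_sum_filter_not Finset.univ (fun i => j < i)
      (fun i => Complex.normSq (L⁻¹ i j))]
    have h1 : ∑ i ∈ Finset.univ.filter (fun i => ¬ j < i), Complex.normSq (L⁻¹ i j)
        = Complex.normSq (L⁻¹ j j) := by
      refine Finset.sum_eq_single_of_mem j (by simp) (fun k hk hkj => ?_)
      have hlt : k < j := lt_of_le_of_ne (not_lt.mp (Finset.mem_filter.mp hk).2) hkj
      rw [hTtri k j hlt, map_zero]
    have h2 : ∑ i ∈ Finset.univ.filter (fun i => j < i), Complex.normSq (L⁻¹ i j)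
        = kappa M L j * Complex.normSq (L⁻¹ j j) := by
      rw [kappa, ← Finset.sum_div, div_mul_cancel₀ _ (hTnz j)]
    rw [h1, h2, nTd j]
    ring
  have hτ : τ = (∑ i, (d i)⁻¹) + ∑ i, kappa M L i * (d i)⁻¹ := by
    rw [hτdef, Finset.sum_comm, ← Finset.sum_add_distrib]
    refine Finset.sum_congr rfl fun j _ => ?_
    have h5 : ∑ i, Complex.normSq (G⁻¹ i j) = ∑ i, Complex.normSq (L⁻¹ i j) * (lam j)⁻¹ :=
      Finset.sum_congr rfl fun i _ => hentry i j
    rw [h5, ← Finset.sum_mul, hcol j]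
    simp only [hd, mul_inv]
    ring
  -- bound on gre over [0,1]
  have hcont : ContinuousOn gre (Set.Icc (0:ℝ) 1) := by
    refine Continuous.continuousOn ?_
    exact Complex.continuous_re.comp ((pol.continuous).comp Complex.continuous_ofReal)
  obtain ⟨R, hR⟩ := (isCompact_Icc).exists_bound_of_continuousOn hcont
  have hRbd : ∀ x ∈ Set.Icc (0:ℝ) 1, |gre x| ≤ R := by
    intro x hx
    simpa [Real.norm_eq_abs] using hR x hx
  obtain ⟨ε₁, hε₁, B₁, hB₁⟩ := myCore a τ hapos gre R hRbd
  -- per-factor bound data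
  set E : ℝ := 1 + ∑ i, (d i)⁻¹ with hE
  have hEpos : 0 < E := by
    have : (0:ℝ) ≤ ∑ i, (d i)⁻¹ :=
      Finset.sum_nonneg fun i _ => (inv_pos.mpr (hdpos i)).le
    rw [hE]; linarith
  have heE : ∀ i, (d i)⁻¹ ≤ E := by
    intro i
    have h6 : (d i)⁻¹ ≤ ∑ j, (d j)⁻¹ :=
      Finset.single_le_sum (fun j _ => (inv_pos.mpr (hdpos j)).le) (Finset.mem_univ i)
    rw [hE]; linarith
  set B₂ : ℝ := ∑ i : Fin M, 2*((d i)⁻¹)^2 with hB₂def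
  -- the benchmark matrix is G Gᴴ
  have hCC : (Matrix.diagonal (fun i => (Real.sqrt (lam i) : ℂ)) * L * Q) *
      (Matrix.diagonal (fun i => (Real.sqrt (lam i) : ℂ)) * L * Q)ᴴ = G * Gᴴ := by
    rw [Matrix.conjTranspose_mul, ← hG, Matrix.mul_assoc, ← Matrix.mul_assoc Q Qᴴ Gᴴ, hQ,
      Matrix.one_mul]
  refine ⟨(B₁ + B₂)/Real.log 2, ?_⟩
  rw [eventually_atTop]
  refine ⟨max 1 (max ε₁⁻¹ (2*E)), fun ρ hρ => ?_⟩
  have hρ1 : (1:ℝ) ≤ ρ := le_trans (le_max_left _ _) hρ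
  have hρ0 : 0 < ρ := lt_of_lt_of_le one_pos hρ1
  set x : ℝ := ρ⁻¹ with hx
  have hx0 : 0 < x := inv_pos.mpr hρ0
  have hxε₁ : x ≤ ε₁ :=
    inv_le_of_inv_le₀ hε₁ (le_trans (le_max_left _ _) (le_trans (le_max_right _ _) hρ))
  have hxE : x ≤ (2*E)⁻¹ := by
    have h7 : 2*E ≤ ρ := le_trans (le_max_right _ _) (le_trans (le_max_right _ _) hρ)
    exact inv_anti₀ (by positivity) h7
  obtain ⟨hfpos, hD₁⟩ := hB₁ x ⟨hx0, hxε₁⟩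
  -- rewrite benchRate
  have hsc : (1 : Matrix (Fin M) (Fin M) ℂ) + (ρ:ℂ) • (G*Gᴴ)
      = (ρ:ℂ) • ((x:ℂ) • (1 : Matrix (Fin M) (Fin M) ℂ) + G*Gᴴ) := by
    rw [smul_add, smul_smul]
    have h8 : (ρ:ℂ) * (x:ℂ) = 1 := by
      rw [hx, ← Complex.ofReal_mul, mul_inv_cancel₀ hρ0.ne']
      norm_num
    rw [h8, one_smul]
  have hbench : benchRate M m lam L Q ρ
      = Real.logb 2 (ρ^M * (a * (1 + τ*x + gre x * x^2))) := by
    rw [benchRate, hCC, hsc, Matrix.det_smul, Fintype.card_fin, ← Complex.ofReal_pow,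
      Complex.re_ofReal_mul, hdet x]
  have hrate : rateDPC M lam L ρ
      = (M:ℝ) * Real.logb 2 ρ + (∑ i, Real.logb 2 (d i))
        + ∑ i, Real.logb 2 (1 + x * (d i)⁻¹) := by
    rw [rateDPC]
    have h9 : ∀ i : Fin M, Real.logb 2 (1 + ρ * lam i * Complex.normSq (L i i))
        = Real.logb 2 ρ + Real.logb 2 (d i) + Real.logb 2 (1 + x * (d i)⁻¹) := by
      intro i
      have h10 : 1 + ρ * lam i * Complex.normSq (L i i)
          = ρ * d i * (1 + x * (d i)⁻¹) := by
        have hne1 : lam i ≠ 0 := (hlam i).ne'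
        have hne2 : Complex.normSq (L i i) ≠ 0 := (Complex.normSq_pos.mpr (hLdiag i)).ne'
        rw [hd, hx]
        field_simp
        ring
      have hdi := hdpos i
      have h11 : 0 < 1 + x * (d i)⁻¹ := by positivity
      rw [h10, Real.logb_mul (mul_pos hρ0 hdi).ne' h11.ne',
        Real.logb_mul hρ0.ne' hdi.ne']
    rw [Finset.sum_congr rfl fun i _ => h9 i, Finset.sum_add_distrib, Finset.sum_add_distrib,
      Finset.sum_const, Finset.card_univ, Fintype.card_fin, nsmul_eq_mul]
  -- per-factor bounds
  have hfac : ∀ i : Fin M, |Real.log (1 + x*(d i)⁻¹) - x*(d i)⁻¹| ≤ 2*((d i)⁻¹)^2 * x^2 := by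
    intro i
    have h12 : |x * (d i)⁻¹| ≤ 1/2 := by
      rw [abs_of_nonneg (mul_nonneg hx0.le (inv_pos.mpr (hdpos i)).le)]
      calc x * (d i)⁻¹ ≤ (2*E)⁻¹ * E :=
            mul_le_mul hxE (heE i) (inv_pos.mpr (hdpos i)).le
              (inv_pos.mpr (by linarith : (0:ℝ) < 2*E)).le
        _ = 1/2 := by
            rw [mul_inv, mul_assoc, inv_mul_cancel₀ hEpos.ne', mul_one]
            norm_num
    have := myLogBound h12
    calc |Real.log (1 + x*(d i)⁻¹) - x*(d i)⁻¹| ≤ 2*(x*(d i)⁻¹)^2 := this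
      _ = 2*((d i)⁻¹)^2 * x^2 := by ring
  have hD₂ : |∑ i : Fin M, (Real.log (1 + x*(d i)⁻¹) - x*(d i)⁻¹)| ≤ B₂ * x^2 := by
    refine (Finset.abs_sum_le_sum_abs _ _).trans ?_
    rw [hB₂def, Finset.sum_mul]
    exact Finset.sum_le_sum fun i _ => hfac i
  -- assemble
  have hlog2 : 0 < Real.log 2 := Real.log_pos (by norm_num)
  have hbpos : 0 < ρ^M * (a * (1 + τ*x + gre x * x^2)) := mul_pos (pow_pos hρ0 M) hfpos
  have hgap : benchRate M m lam L Q ρ - rateDPC M lam L ρ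
      = (Real.log (a * (1 + τ*x + gre x * x^2)) - Real.log a
        - ∑ i, Real.log (1 + x * (d i)⁻¹)) / Real.log 2 := by
    rw [hbench, hrate]
    rw [Real.logb_mul (pow_pos hρ0 M).ne' hfpos.ne', Real.logb_pow]
    have h13 : ∑ i, Real.logb 2 (d i) = Real.log a / Real.log 2 := by
      rw [ha, Real.log_prod fun i _ => (hdpos i).ne', Finset.sum_div]
      simp [Real.logb]
    have h14 : ∑ i, Real.logb 2 (1 + x * (d i)⁻¹)
        = (∑ i, Real.log (1 + x * (d i)⁻¹)) / Real.log 2 := by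
      rw [Finset.sum_div]
      simp [Real.logb]
    have h14b : Real.logb 2 (a * (1 + τ*x + gre x * x^2))
        = Real.log (a * (1 + τ*x + gre x * x^2)) / Real.log 2 := by simp [Real.logb]
    rw [h13, h14, h14b]
    ring
  have hS : (∑ i, kappa M L i / (lam i * Complex.normSq (L i i)))
      = ∑ i, kappa M L i * (d i)⁻¹ := by
    refine Finset.sum_congr rfl fun i _ => ?_
    rw [div_eq_mul_inv, hd]
  rw [hgap, hS]
  have h15 : (1 / (ρ * Real.log 2)) * ∑ i, kappa M L i * (d i)⁻¹
      = (x * ∑ i, kappa M L i * (d i)⁻¹) / Real.log 2 := by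
    rw [hx]
    field_simp
  rw [h15]
  have h16 : (Real.log (a * (1 + τ*x + gre x * x^2)) - Real.log a
        - ∑ i, Real.log (1 + x * (d i)⁻¹)) / Real.log 2
      - (x * ∑ i, kappa M L i * (d i)⁻¹) / Real.log 2
      = ((Real.log (a * (1 + τ*x + gre x * x^2)) - Real.log a - τ*x)
        - ∑ i : Fin M, (Real.log (1 + x*(d i)⁻¹) - x*(d i)⁻¹)) / Real.log 2 := by
    rw [← sub_div]
    congr 1
    rw [hτ, Finset.sum_sub_distrib, ← Finset.mul_sum]
    ring
  rw [h16]
  have h17 : |(Real.log (a * (1 + τ*x + gre x * x^2)) - Real.log a - τ*x)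
        - ∑ i : Fin M, (Real.log (1 + x*(d i)⁻¹) - x*(d i)⁻¹)| ≤ (B₁ + B₂) * x^2 := by
    refine (abs_sub _ _).trans ?_
    calc |Real.log (a * (1 + τ*x + gre x * x^2)) - Real.log a - τ*x|
          + |∑ i : Fin M, (Real.log (1 + x*(d i)⁻¹) - x*(d i)⁻¹)|
        ≤ B₁*x^2 + B₂*x^2 := add_le_add hD₁ hD₂
      _ = (B₁ + B₂) * x^2 := by ring
  rw [abs_mul, abs_div, abs_of_nonneg (sq_nonneg ρ), abs_of_pos hlog2]
  have h18 : ρ^2 * x^2 = 1 := by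
    rw [hx]
    field_simp
  calc ρ^2 * (|(Real.log (a * (1 + τ*x + gre x * x^2)) - Real.log a - τ*x)
        - ∑ i : Fin M, (Real.log (1 + x*(d i)⁻¹) - x*(d i)⁻¹)| / Real.log 2)
      ≤ ρ^2 * (((B₁ + B₂) * x^2) / Real.log 2) := by
        refine mul_le_mul_of_nonneg_left ?_ (sq_nonneg ρ)
        gcongr
    _ = (B₁ + B₂) / Real.log 2 := by
        have h19 : ρ^2 * (((B₁ + B₂) * x^2) / Real.log 2)
            = (ρ^2 * x^2) * ((B₁ + B₂) / Real.log 2) := by ring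
        rw [h19, h18, one_mul]
end

section
/- As ρ → ∞, the gap between the benchmark rate and the equal-power ZFBF-SUS sum rate satisfies C(ρ) − R_BF(ρ) = Σ_{i=1}^{M} log₂(1 + κ_i) + O(ρ^{-2}); that is, the function ρ ↦ ρ² · ( C(ρ) − R_BF(ρ) − Σ_{i=1}^{M} log₂(1 + κ_i) ) is bounded as ρ → ∞. -/
open Matrix Filter Finset MeasureTheory

/-- The equal-power ZFBF-SUS sum rate `R_BF(ρ) = Σ_i log₂(1 + ρ λ_i / ‖t_i‖²)`,
where `‖t_i‖² = Σ_j |t_{j,i}|²` is the squared norm of the `i`-th column of `T = L⁻¹`. -/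
noncomputable def rateBF (M : ℕ) (lam : Fin M → ℝ)
    (L : Matrix (Fin M) (Fin M) ℂ) (ρ : ℝ) : ℝ :=
  ∑ i, Real.logb 2 (1 + ρ * lam i / ∑ j, Complex.normSq (L⁻¹ j i))

/-- `η_i = Σ_{j<i} |l_{i,j}|²/|l_{i,i}|²`. -/
noncomputable def eta (M : ℕ) (L : Matrix (Fin M) (Fin M) ℂ) (i : Fin M) : ℝ :=
  ∑ j ∈ Finset.univ.filter (fun j => j < i),
    Complex.normSq (L i j) / Complex.normSq (L i i)


lemma abs_log1p_sub_le_sq {x : ℝ} (hx : 0 ≤ x) : |Real.log (1+x) - x| ≤ x^2 := by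
  have h1 : (0:ℝ) < 1 + x := by linarith
  have hup : Real.log (1+x) ≤ x := by
    have := Real.log_le_sub_one_of_pos h1; linarith
  have hlo : x - x^2 ≤ Real.log (1+x) := by
    have := Real.one_sub_inv_le_log_of_pos h1
    have h2 : 1 - (1+x)⁻¹ = x / (1+x) := by field_simp; ring
    have h3 : x - x^2 ≤ x / (1+x) := by
      rw [le_div_iff₀ h1]; nlinarith
    linarith [h2 ▸ this]
  rw [abs_le]; constructor <;> nlinarith

set_option maxHeartbeats 2000000 in
/-- High-SNR gap for ZFBF-SUS:
`C(ρ) − R_BF(ρ) = Σ_i log₂(1 + κ_i) + O(ρ⁻²)` as `ρ → ∞`. -/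
theorem highSNR_gap_ZFBF
    (M m : ℕ) (hM : 1 ≤ M) (hm : M ≤ m)
    (lam : Fin M → ℝ) (hlam : ∀ i, 0 < lam i)
    (L : Matrix (Fin M) (Fin M) ℂ)
    (hLtri : ∀ i j : Fin M, i < j → L i j = 0)
    (hLdiag : ∀ i : Fin M, L i i ≠ 0)
    (Q : Matrix (Fin M) (Fin m) ℂ) (hQ : Q * Qᴴ = 1) :
    ∃ B : ℝ, ∀ᶠ ρ : ℝ in atTop,
      |ρ ^ 2 * (benchRate M m lam L Q ρ - rateBF M lam L ρ -
        ∑ i, Real.logb 2 (1 + kappa M L i))| ≤ B := by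
  classical
  set d : Fin M → ℂ := fun i => (Real.sqrt (lam i) : ℂ) with hd
  set S : Matrix (Fin M) (Fin M) ℂ := Matrix.diagonal d * L with hSdef
  -- determinant of L
  have hLBT : L.BlockTriangular OrderDual.toDual := fun i j h => hLtri i j h
  have hdetL : L.det = ∏ i, L i i := Matrix.det_of_lowerTriangular L hLBT
  have hdetLne : L.det ≠ 0 := by
    rw [hdetL]; exact Finset.prod_ne_zero_iff.2 fun i _ => hLdiag i
  have hdne : ∀ i, d i ≠ 0 := by
    intro i
    simp only [hd, ne_eq, Complex.ofReal_eq_zero]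
    exact ne_of_gt (Real.sqrt_pos.2 (hlam i))
  have hdetS : S.det = (∏ i, d i) * ∏ i, L i i := by
    rw [hSdef, Matrix.det_mul, Matrix.det_diagonal, hdetL]
  have hdetSne : S.det ≠ 0 := by
    rw [hdetS]
    exact mul_ne_zero (Finset.prod_ne_zero_iff.2 fun i _ => hdne i)
      (Finset.prod_ne_zero_iff.2 fun i _ => hLdiag i)
  -- D and its eigenvalues
  set D : Matrix (Fin M) (Fin M) ℂ := S * Sᴴ with hDdef
  have hD : D.IsHermitian := Matrix.isHermitian_mul_conjTranspose_self S
  set μ : Fin M → ℝ := hD.eigenvalues with hμ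
  have hdetD : D.det = (Complex.normSq S.det : ℂ) := by
    rw [hDdef, Matrix.det_mul, Matrix.det_conjTranspose]
    exact Complex.mul_conj _
  have hprodμC : (∏ i, (μ i : ℂ)) = (Complex.normSq S.det : ℂ) := by
    have h := hD.det_eq_prod_eigenvalues
    rw [hdetD] at h
    rw [hμ]
    simpa using h.symm
  have hμ0 : ∀ i, 0 ≤ μ i := fun i => Matrix.eigenvalues_self_mul_conjTranspose_nonneg S i
  have hμpos : ∀ i, 0 < μ i := by
    intro i
    rcases (hμ0 i).lt_or_eq with h | h
    · exact h
    · exfalso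
      have : (∏ j, (μ j : ℂ)) = 0 := by
        apply Finset.prod_eq_zero (Finset.mem_univ i)
        simp [← h]
      rw [hprodμC] at this
      exact hdetSne (Complex.normSq_eq_zero.1 (by exact_mod_cast this)) 
  -- T = L⁻¹ facts
  have hLunit : IsUnit L.det := isUnit_iff_ne_zero.2 hdetLne
  haveI : Invertible L := L.invertibleOfIsUnitDet hLunit
  have hTtri : ∀ i j : Fin M, i < j → L⁻¹ i j = 0 := by
    intro i j h
    exact Matrix.blockTriangular_inv_of_blockTriangular hLBT h
  have hTmul : ∀ i : Fin M, L⁻¹ i i * L i i = 1 := by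
    intro i
    have h1 : (L⁻¹ * L) i i = 1 := by
      rw [Matrix.nonsing_inv_mul L hLunit]; simp [Matrix.one_apply]
    rw [Matrix.mul_apply] at h1
    have h2 : ∑ k, L⁻¹ i k * L k i = L⁻¹ i i * L i i := by
      apply Finset.sum_eq_single
      · intro k _ hk
        rcases lt_or_gt_of_ne hk with h | h
        · rw [hLtri k i h, mul_zero]
        · rw [hTtri i k h, zero_mul]
      · intro h; exact absurd (Finset.mem_univ i) h
    rw [← h1, h2]
  have hTdiagval : ∀ i, L⁻¹ i i = (L i i)⁻¹ := by
    intro i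
    have := hTmul i
    field_simp [hLdiag i] at this ⊢
    linear_combination this
  have hTiine : ∀ i, L⁻¹ i i ≠ 0 := by
    intro i; rw [hTdiagval i]; exact inv_ne_zero (hLdiag i)
  have hnormTii : ∀ i, Complex.normSq (L⁻¹ i i) = (Complex.normSq (L i i))⁻¹ := by
    intro i; rw [hTdiagval i, Complex.normSq_inv]
  set nt : Fin M → ℝ := fun i => ∑ j, Complex.normSq (L⁻¹ j i) with hnt
  have hkap0 : ∀ i, 0 ≤ kappa M L i := by
    intro i
    exact Finset.sum_nonneg fun j _ => div_nonneg (Complex.normSq_nonneg _) (Complex.normSq_nonneg _)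
  have hntsplit : ∀ i, nt i = Complex.normSq (L⁻¹ i i) * (1 + kappa M L i) := by
    intro i
    have hne : Complex.normSq (L⁻¹ i i) ≠ 0 := (Complex.normSq_pos.2 (hTiine i)).ne'
    rw [kappa, mul_add, mul_one, Finset.mul_sum]
    have h2 : ∀ j ∈ Finset.univ.filter (fun j => i < j),
        Complex.normSq (L⁻¹ i i) * (Complex.normSq (L⁻¹ j i) / Complex.normSq (L⁻¹ i i))
          = Complex.normSq (L⁻¹ j i) := fun j _ => mul_div_cancel₀ _ hne
    rw [Finset.sum_congr rfl h2]
    have h3 := Finset.sum_filter_add_sum_filter_not Finset.univ (fun j => i < j)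
      (fun j => Complex.normSq (L⁻¹ j i))
    have h4 : ∑ j ∈ Finset.univ.filter (fun j => ¬ i < j), Complex.normSq (L⁻¹ j i)
        = Complex.normSq (L⁻¹ i i) := by
      refine Finset.sum_eq_single_of_mem i (by simp) (fun j hj hji => ?_)
      rw [Finset.mem_filter] at hj
      have : j < i := lt_of_le_of_ne (not_lt.1 hj.2) hji
      rw [hTtri j i this]; simp
    simp only [hnt]
    rw [← h3, h4]; ring
  have hntpos : ∀ i, 0 < nt i := by
    intro i
    rw [hntsplit i]
    have := Complex.normSq_pos.2 (hTiine i)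
    nlinarith [hkap0 i]
  -- benchRate reduction
  have hCC : (Matrix.diagonal d * L * Q) * (Matrix.diagonal d * L * Q)ᴴ = D := by
    rw [hDdef, hSdef, Matrix.conjTranspose_mul, Matrix.mul_assoc (Matrix.diagonal d * L),
      ← Matrix.mul_assoc Q, hQ, Matrix.one_mul]
  -- spectral theorem
  set U : Matrix (Fin M) (Fin M) ℂ := (hD.eigenvectorUnitary : Matrix (Fin M) (Fin M) ℂ) with hU
  have hU2 : U * star U = 1 := (Matrix.mem_unitaryGroup_iff).mp hD.eigenvectorUnitary.2
  have hU1 : star U * U = 1 := (Matrix.mem_unitaryGroup_iff').mp hD.eigenvectorUnitary.2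
  have hspec : D = U * Matrix.diagonal (fun i => ((μ i : ℝ) : ℂ)) * star U := by
    exact hD.spectral_theorem
  have hdiagsum : ∀ ρ : ℝ, Matrix.diagonal (fun i => ((1 + ρ * μ i : ℝ) : ℂ))
      = 1 + (ρ:ℂ) • Matrix.diagonal (fun i => ((μ i : ℝ) : ℂ)) := by
    intro ρ
    ext i j
    by_cases h : i = j
    · subst h
      simp only [Matrix.diagonal_apply_eq, Matrix.add_apply, Matrix.one_apply_eq,
        Matrix.smul_apply, smul_eq_mul]
      push_cast; ring
    · simp [Matrix.diagonal_apply_ne _ h, Matrix.one_apply_ne h]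
  have hconj : ∀ ρ : ℝ, (1 : Matrix (Fin M) (Fin M) ℂ) + (ρ:ℂ) • D
      = U * Matrix.diagonal (fun i => ((1 + ρ * μ i : ℝ) : ℂ)) * star U := by
    intro ρ
    rw [hdiagsum ρ, Matrix.mul_add, Matrix.add_mul, Matrix.mul_one, hU2,
      Matrix.mul_smul, Matrix.smul_mul, ← hspec]
  have hdet1 : ∀ ρ : ℝ, ((1 : Matrix (Fin M) (Fin M) ℂ) + (ρ:ℂ) • D).det
      = ((∏ i, (1 + ρ * μ i) : ℝ) : ℂ) := by
    intro ρ
    rw [hconj ρ]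
    have h5 : (U * Matrix.diagonal (fun i => ((1 + ρ * μ i : ℝ) : ℂ)) * star U).det
        = (U * star U).det * (Matrix.diagonal (fun i => ((1 + ρ * μ i : ℝ) : ℂ))).det := by
      rw [Matrix.det_mul, Matrix.det_mul, Matrix.det_mul]; ring
    rw [h5, hU2, Matrix.det_one, one_mul, Matrix.det_diagonal, Complex.ofReal_prod]
  have hbench : ∀ ρ : ℝ, benchRate M m lam L Q ρ = Real.logb 2 (∏ i, (1 + ρ * μ i)) := by
    intro ρ
    rw [benchRate]
    have : Matrix.diagonal (fun i => ((Real.sqrt (lam i) : ℝ) : ℂ)) = Matrix.diagonal d := rfl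
    rw [this, hCC, hdet1 ρ, Complex.ofReal_re]
  -- trace identity
  have hdiag_inv : ∀ (v : Fin M → ℂ), (∀ i, v i ≠ 0) →
      (Matrix.diagonal v)⁻¹ = Matrix.diagonal (fun i => (v i)⁻¹) := by
    intro v hv
    apply Matrix.inv_eq_right_inv
    rw [Matrix.diagonal_mul_diagonal]
    have : (fun i => v i * (v i)⁻¹) = fun _ => (1:ℂ) := funext fun i => mul_inv_cancel₀ (hv i)
    rw [this, Matrix.diagonal_one]
  have hDinv : D⁻¹ = U * Matrix.diagonal (fun i => (((μ i : ℝ) : ℂ))⁻¹) * star U := by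
    rw [hspec, Matrix.mul_inv_rev, Matrix.mul_inv_rev]
    have h6 : (star U)⁻¹ = U := Matrix.inv_eq_right_inv hU1
    have h7 : U⁻¹ = star U := Matrix.inv_eq_right_inv hU2
    rw [h6, h7, hdiag_inv _ (fun i => by exact_mod_cast (hμpos i).ne'), Matrix.mul_assoc]
  have htrace1 : D⁻¹.trace = ((∑ i, (μ i)⁻¹ : ℝ) : ℂ) := by
    rw [hDinv, Matrix.trace_mul_cycle, hU1, Matrix.one_mul, Matrix.trace_diagonal]
    norm_cast
  have hSinv : ∀ k i, S⁻¹ k i = L⁻¹ k i * (d i)⁻¹ := by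
    intro k i
    rw [hSdef, Matrix.mul_inv_rev, hdiag_inv d hdne, Matrix.mul_diagonal]
  have hnormd : ∀ i, Complex.normSq (d i) = lam i := by
    intro i
    simp only [hd, Complex.normSq_ofReal]
    exact Real.mul_self_sqrt (hlam i).le
  have htrace2 : D⁻¹.trace = ((∑ i, nt i / lam i : ℝ) : ℂ) := by
    have hDinvS : D⁻¹ = (S⁻¹)ᴴ * S⁻¹ := by
      rw [hDdef, Matrix.mul_inv_rev, Matrix.conjTranspose_nonsing_inv]
    rw [hDinvS, Matrix.trace]
    have h8 : ∀ i, ((S⁻¹)ᴴ * S⁻¹).diag i = ((∑ k, Complex.normSq (S⁻¹ k i) : ℝ) : ℂ) := by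
      intro i
      rw [Matrix.diag, Matrix.mul_apply, Complex.ofReal_sum]
      refine Finset.sum_congr rfl fun k _ => ?_
      rw [Matrix.conjTranspose_apply, Complex.normSq_eq_conj_mul_self]
      rfl
    rw [Finset.sum_congr rfl (fun i _ => h8 i), ← Complex.ofReal_sum]
    congr 1
    refine Finset.sum_congr rfl fun i _ => ?_
    have h9 : ∀ k, Complex.normSq (S⁻¹ k i) = Complex.normSq (L⁻¹ k i) / lam i := by
      intro k
      rw [hSinv k i, Complex.normSq_mul, Complex.normSq_inv, hnormd i, div_eq_mul_inv]
    rw [Finset.sum_congr rfl (fun k _ => h9 k), ← Finset.sum_div]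
  have hsum_eq : ∑ i, (μ i)⁻¹ = ∑ i, nt i / lam i := by
    have h := htrace1.symm.trans htrace2
    exact_mod_cast h
  -- product identity
  have hprodμ : ∏ i, μ i = ∏ i, (lam i * Complex.normSq (L i i)) := by
    have h10 : Complex.normSq S.det = ∏ i, (lam i * Complex.normSq (L i i)) := by
      rw [hdetS, map_mul Complex.normSq, map_prod Complex.normSq, map_prod Complex.normSq,
        ← Finset.prod_mul_distrib]
      exact Finset.prod_congr rfl fun i _ => by rw [hnormd i]
    have h11 : ((∏ i, μ i : ℝ) : ℂ) = ((∏ i, (lam i * Complex.normSq (L i i)) : ℝ) : ℂ) := by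
      rw [Complex.ofReal_prod, hprodμC, h10, Complex.ofReal_prod]
    exact_mod_cast h11
  -- analytic setup
  set a : Fin M → ℝ := fun i => lam i * Complex.normSq (L i i) with hadef
  have ha : ∀ i, 0 < a i := fun i => mul_pos (hlam i) (Complex.normSq_pos.2 (hLdiag i))
  set c : Fin M → ℝ := fun i => (μ i)⁻¹ with hcdef
  set c' : Fin M → ℝ := fun i => nt i / lam i with hc'def
  have hc : ∀ i, 0 < c i := fun i => inv_pos.2 (hμpos i)
  have hc' : ∀ i, 0 < c' i := fun i => div_pos (hntpos i) (hlam i)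
  have hsum_cc : ∑ i, c i = ∑ i, c' i := hsum_eq
  have hκ'pos : ∀ i, (0:ℝ) < 1 + kappa M L i := fun i => by linarith [hkap0 i]
  have hlogμa : ∑ i, Real.logb 2 (μ i) = ∑ i, Real.logb 2 (a i) := by
    have h12 : Real.logb 2 (∏ i, μ i) = Real.logb 2 (∏ i, a i) := by rw [hprodμ]
    rwa [Real.logb_prod _ _ (fun i _ => (hμpos i).ne'),
      Real.logb_prod _ _ (fun i _ => (ha i).ne')] at h12
  have hntdef : ∀ i, (∑ j, Complex.normSq (L⁻¹ j i)) = nt i := fun i => rfl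
  have hnsq : ∀ i, 0 < Complex.normSq (L i i) := fun i => Complex.normSq_pos.2 (hLdiag i)
  -- gap formula for ρ > 0
  have hgap : ∀ ρ : ℝ, 0 < ρ →
      benchRate M m lam L Q ρ - rateBF M lam L ρ - ∑ i, Real.logb 2 (1 + kappa M L i)
        = ∑ i, (Real.logb 2 (1 + c i / ρ) - Real.logb 2 (1 + c' i / ρ)) := by
    intro ρ hρ
    have hbρ : benchRate M m lam L Q ρ = ∑ i, Real.logb 2 (1 + ρ * μ i) := by
      rw [hbench ρ]
      exact Real.logb_prod _ _ fun i _ =>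
        (by nlinarith [mul_pos hρ (hμpos i)] : (0:ℝ) < 1 + ρ * μ i).ne'
    have hrateρ : rateBF M lam L ρ = ∑ i, Real.logb 2 (1 + ρ * lam i / nt i) := by
      rw [rateBF]
    rw [hbρ, hrateρ, ← Finset.sum_sub_distrib, ← Finset.sum_sub_distrib]
    have hper : ∀ i, Real.logb 2 (1 + ρ * μ i) - Real.logb 2 (1 + ρ * lam i / nt i)
        - Real.logb 2 (1 + kappa M L i)
        = (Real.logb 2 (μ i) - Real.logb 2 (a i))
          + (Real.logb 2 (1 + c i / ρ) - Real.logb 2 (1 + c' i / ρ)) := by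
      intro i
      have hx1 : (0:ℝ) < 1 + c i / ρ := by
        have := div_pos (hc i) hρ; linarith
      have hx2 : (0:ℝ) < 1 + c' i / ρ := by
        have := div_pos (hc' i) hρ; linarith
      have hx3 : (0:ℝ) < 1 + ρ * lam i / nt i := by
        have := div_pos (mul_pos hρ (hlam i)) (hntpos i); linarith
      have e1 : 1 + ρ * μ i = μ i * (1 + c i / ρ) * ρ := by
        simp only [hcdef]
        field_simp [(hμpos i).ne', hρ.ne']
        ring
      have e2 : (1 + kappa M L i) * (1 + ρ * lam i / nt i) = a i * (1 + c' i / ρ) * ρ := by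
        have hnt1 : nt i = (Complex.normSq (L i i))⁻¹ * (1 + kappa M L i) := by
          rw [hntsplit i, hnormTii i]
        simp only [hadef, hc'def]
        rw [hnt1]
        field_simp [(hκ'pos i).ne', (hlam i).ne', (hnsq i).ne', hρ.ne']
        ring
      have h1 : Real.logb 2 (1 + ρ * μ i)
          = Real.logb 2 (μ i) + Real.logb 2 (1 + c i / ρ) + Real.logb 2 ρ := by
        rw [e1, Real.logb_mul (mul_pos (hμpos i) hx1).ne' hρ.ne',
          Real.logb_mul (hμpos i).ne' hx1.ne']
      have h2 : Real.logb 2 (1 + ρ * lam i / nt i) + Real.logb 2 (1 + kappa M L i)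
          = Real.logb 2 (a i) + Real.logb 2 (1 + c' i / ρ) + Real.logb 2 ρ := by
        rw [← Real.logb_mul hx3.ne' (hκ'pos i).ne', mul_comm, e2,
          Real.logb_mul (mul_pos (ha i) hx2).ne' hρ.ne', Real.logb_mul (ha i).ne' hx2.ne']
      linarith
    rw [Finset.sum_congr rfl (fun i _ => hper i), Finset.sum_add_distrib,
      Finset.sum_sub_distrib, hlogμa]
    ring
  -- the bound
  have hlog2 : (0:ℝ) < Real.log 2 := Real.log_pos (by norm_num)
  have key : ∀ (x ρ : ℝ), 0 < x → 0 < ρ →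
      |ρ^2 * (Real.logb 2 (1 + x / ρ) - x / (ρ * Real.log 2))| ≤ x^2 / Real.log 2 := by
    intro x ρ hx hρ
    have hxρ : 0 ≤ x / ρ := div_nonneg hx.le hρ.le
    have h13 := abs_log1p_sub_le_sq hxρ
    have h14 : Real.logb 2 (1 + x/ρ) - x/(ρ * Real.log 2)
        = (Real.log (1 + x/ρ) - x/ρ) / Real.log 2 := by
      rw [Real.logb, sub_div, div_div]
    rw [h14, abs_mul, abs_div, abs_of_pos hlog2, abs_of_pos (pow_pos hρ 2), mul_div_assoc']
    rw [div_le_div_iff₀ hlog2 hlog2]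
    have h15 : ρ^2 * |Real.log (1 + x/ρ) - x/ρ| ≤ x^2 := by
      calc ρ^2 * |Real.log (1 + x/ρ) - x/ρ| ≤ ρ^2 * (x/ρ)^2 :=
            mul_le_mul_of_nonneg_left h13 (sq_nonneg ρ)
        _ = x^2 := by field_simp
    nlinarith [hlog2, abs_nonneg (Real.log (1 + x/ρ) - x/ρ), sq_nonneg ρ]
  -- final assembly
  refine ⟨(∑ i, ((c i)^2 + (c' i)^2)) / Real.log 2, ?_⟩
  filter_upwards [eventually_ge_atTop 1] with ρ hρ1
  have hρ : (0:ℝ) < ρ := lt_of_lt_of_le one_pos hρ1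
  set F : Fin M → ℝ := fun i => ρ^2 * (Real.logb 2 (1 + c i/ρ) - c i/(ρ * Real.log 2)) with hF
  set G : Fin M → ℝ := fun i => ρ^2 * (Real.logb 2 (1 + c' i/ρ) - c' i/(ρ * Real.log 2)) with hG
  have heq : ρ^2 * (benchRate M m lam L Q ρ - rateBF M lam L ρ
      - ∑ i, Real.logb 2 (1 + kappa M L i)) = ∑ i, (F i - G i) := by
    rw [hgap ρ hρ]
    have hz : ∑ i, (c i - c' i) = 0 := by
      rw [Finset.sum_sub_distrib, hsum_cc, sub_self]
    have h16 : ∑ i, (F i - G i)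
        = ρ^2 * (∑ i, (Real.logb 2 (1 + c i/ρ) - Real.logb 2 (1 + c' i/ρ)))
          - (ρ/Real.log 2) * ∑ i, (c i - c' i) := by
      rw [Finset.mul_sum, Finset.mul_sum, ← Finset.sum_sub_distrib]
      refine Finset.sum_congr rfl fun i _ => ?_
      simp only [hF, hG]
      field_simp
      ring
    rw [h16, hz, mul_zero, sub_zero]
  rw [heq]
  calc |∑ i, (F i - G i)| ≤ ∑ i, |F i - G i| := Finset.abs_sum_le_sum_abs _ _
    _ ≤ ∑ i, ((c i)^2 + (c' i)^2)/Real.log 2 := by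
        refine Finset.sum_le_sum fun i _ => ?_
        calc |F i - G i| ≤ |F i| + |G i| := abs_sub _ _
          _ ≤ (c i)^2/Real.log 2 + (c' i)^2/Real.log 2 :=
              add_le_add (key (c i) ρ (hc i) hρ) (key (c' i) ρ (hc' i) hρ)
          _ = ((c i)^2 + (c' i)^2)/Real.log 2 := by rw [add_div]
    _ = (∑ i, ((c i)^2 + (c' i)^2))/Real.log 2 := by rw [Finset.sum_div]
end

section
/- As ρ → 0⁺, the gap between the benchmark rate and the equal-power ZFDPC-SUS sum rate satisfies C(ρ) − R_DPC(ρ) = (ρ/ln 2) · Σ_{i=1}^{M} η_i λ_i |l_{i,i}|² + O(ρ²); that is, the function ρ ↦ ρ^{-2} · ( C(ρ) − R_DPC(ρ) − (ρ/ln 2) Σ_{i=1}^{M} η_i λ_i |l_{i,i}|² ) is bounded as ρ → 0⁺. -/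
open Matrix Filter Finset MeasureTheory

lemma log_one_add_sub_le' {u : ℝ} (h : |u| ≤ 1/2) : |Real.log (1+u) - u| ≤ 2 * u^2 := by
  have h1 : |(-u)| < 1 := by rw [abs_neg]; linarith
  have h2 := Real.abs_log_sub_add_sum_range_le h1 1
  simp only [Finset.sum_range_one, abs_neg] at h2
  have h4 : |u|^(1+1) / (1 - |u|) ≤ 2 * u^2 := by
    rw [div_le_iff₀ (by linarith)]
    have : |u|^(1+1) = u^2 := by rw [← sq_abs]; norm_num
    nlinarith [sq_nonneg u, abs_nonneg u]
  have h5 : Real.log (1+u) - u = (-u)^(0+1)/((0:ℕ)+1) + Real.log (1 - -u) := by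
    push_cast; ring_nf
  rw [h5]
  exact le_trans h2 h4

lemma eventually_abs_le_of_continuous {f : ℝ → ℝ} {c : ℝ}
    (hf : Continuous f) (h0 : |f 0| < c) : ∀ᶠ ρ in nhds (0:ℝ), |f ρ| ≤ c := by
  have hop : IsOpen {x : ℝ | |f x| < c} := isOpen_lt (continuous_abs.comp hf) continuous_const
  exact Filter.eventually_of_mem (hop.mem_nhds h0) (fun x hx => le_of_lt hx)

/-- Low-SNR gap for ZFDPC-SUS:
`C(ρ) − R_DPC(ρ) = (ρ/ln 2) Σ_i η_i λ_i |l_{i,i}|² + O(ρ²)` as `ρ → 0⁺`. -/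
theorem lowSNR_gap_ZFDPC
    (M m : ℕ) (hM : 1 ≤ M) (hm : M ≤ m)
    (lam : Fin M → ℝ) (hlam : ∀ i, 0 < lam i)
    (L : Matrix (Fin M) (Fin M) ℂ)
    (hLtri : ∀ i j : Fin M, i < j → L i j = 0)
    (hLdiag : ∀ i : Fin M, L i i ≠ 0)
    (Q : Matrix (Fin M) (Fin m) ℂ) (hQ : Q * Qᴴ = 1) :
    ∃ B : ℝ, ∀ᶠ ρ : ℝ in nhdsWithin (0 : ℝ) (Set.Ioi 0),
      |(ρ ^ 2)⁻¹ * (benchRate M m lam L Q ρ - rateDPC M lam L ρ -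
        (ρ / Real.log 2) *
          ∑ i, eta M L i * lam i * Complex.normSq (L i i))| ≤ B := by
  classical
  set D : Matrix (Fin M) (Fin M) ℂ := Matrix.diagonal (fun i => (Real.sqrt (lam i) : ℂ)) with hD
  set A : Matrix (Fin M) (Fin M) ℂ := (D * L * Q) * (D * L * Q)ᴴ with hA
  set T : ℝ := ∑ i, lam i * ∑ j, Complex.normSq (L i j) with hT
  set S : ℝ := ∑ i, eta M L i * lam i * Complex.normSq (L i i) with hS
  set a : Fin M → ℝ := fun i => lam i * Complex.normSq (L i i) with haa
  -- conjugate-transpose of D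
  have hDh : Dᴴ = D := by
    rw [hD, diagonal_conjTranspose]
    simp [Pi.star_def, Complex.conj_ofReal]
  have hAeq : A = D * (L * Lᴴ) * D := by
    rw [hA, conjTranspose_mul, conjTranspose_mul, hDh]
    rw [Matrix.mul_assoc (D * L) Q _, ← Matrix.mul_assoc Q Qᴴ _, hQ, Matrix.one_mul]
    simp only [Matrix.mul_assoc]
  -- trace of A
  have htr : A.trace = ((T : ℝ) : ℂ) := by
    rw [hAeq, Matrix.trace, hT]
    push_cast
    apply Finset.sum_congr rfl
    intro i _
    have h1 : (Real.sqrt (lam i) : ℂ) * (Real.sqrt (lam i) : ℂ) = (lam i : ℂ) := by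
      rw [← Complex.ofReal_mul, Real.mul_self_sqrt (hlam i).le]
    simp only [Matrix.diag, hD, Matrix.mul_diagonal, Matrix.diagonal_mul]
    rw [mul_right_comm, h1, Matrix.mul_apply]
    congr 1
    apply Finset.sum_congr rfl
    intro j _
    rw [Matrix.conjTranspose_apply, RCLike.star_def, Complex.mul_conj]
  -- the quadratic-remainder polynomial
  set pol : Polynomial ℂ :=
    ((1 + (Polynomial.X : Polynomial ℂ) • A.map Polynomial.C).det).divX.divX with hpol
  set q : ℝ → ℝ := fun ρ => (pol.eval (ρ:ℂ)).re with hq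
  set u : ℝ → ℝ := fun ρ => T * ρ + q ρ * ρ^2 with hu
  have hre : ∀ ρ : ℝ, ((1 + (ρ:ℂ) • A).det).re = 1 + u ρ := by
    intro ρ
    rw [Matrix.det_one_add_smul, htr, ← hpol]
    simp only [Complex.add_re, Complex.one_re, Complex.mul_re, Complex.ofReal_re,
      Complex.ofReal_im, hu, hq]
    have h2 : ((ρ:ℂ)^2).re = ρ^2 := by rw [← Complex.ofReal_pow]; exact Complex.ofReal_re _
    have h3 : ((ρ:ℂ)^2).im = 0 := by rw [← Complex.ofReal_pow]; exact Complex.ofReal_im _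
    rw [h2, h3]
    ring
  -- benchRate in terms of u
  have hbr : ∀ ρ : ℝ, benchRate M m lam L Q ρ = Real.logb 2 (1 + u ρ) := by
    intro ρ
    rw [benchRate, ← hD, ← hA, hre ρ]
  -- row sums for the lower-triangular matrix
  have hrow : ∀ i, (∑ j, Complex.normSq (L i j)) = Complex.normSq (L i i) +
      ∑ j ∈ Finset.univ.filter (fun j => j < i), Complex.normSq (L i j) := by
    intro i
    rw [← Finset.sum_filter_add_sum_filter_not Finset.univ (fun j => j < i), add_comm]
    congr 1
    apply Finset.sum_eq_single_of_mem i (by simp)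
    intro j hj hji
    simp only [Finset.mem_filter, not_lt] at hj
    rw [hLtri i j (lt_of_le_of_ne hj.2 (Ne.symm hji)), Complex.normSq_zero]
  have heta : ∀ i, eta M L i * lam i * Complex.normSq (L i i) =
      lam i * ∑ j ∈ Finset.univ.filter (fun j => j < i), Complex.normSq (L i j) := by
    intro i
    have hc : Complex.normSq (L i i) ≠ 0 := by
      simpa [Complex.normSq_eq_zero] using hLdiag i
    rw [eta, ← Finset.sum_div]
    field_simp
  have hTS : T = (∑ i, a i) + S := by
    rw [hT, hS, ← Finset.sum_add_distrib]
    apply Finset.sum_congr rfl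
    intro i _
    rw [hrow i, heta i, haa]
    ring
  -- continuity of q and u
  have hqc : Continuous q := by
    rw [hq]
    exact Complex.continuous_re.comp ((pol.continuous).comp Complex.continuous_ofReal)
  have huc : Continuous u := by
    rw [hu]; fun_prop
  clear_value D A T S a pol q u
  set Qb : ℝ := |q 0| + 1 with hQb
  clear_value Qb
  have hQbpos : 0 < Qb := by rw [hQb]; positivity
  have hq0 : ∀ᶠ ρ in nhds (0:ℝ), |q ρ| ≤ Qb :=
    eventually_abs_le_of_continuous hqc (by rw [hQb]; linarith [abs_nonneg (q 0)])
  have hu0 : ∀ᶠ ρ in nhds (0:ℝ), |u ρ| ≤ 1/2 := by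
    apply eventually_abs_le_of_continuous huc
    have : u 0 = 0 := by rw [hu]; ring
    rw [this]; norm_num
  have ha0 : ∀ᶠ ρ in nhds (0:ℝ), ∀ i, |a i * ρ| ≤ 1/2 := by
    rw [Filter.eventually_all]
    intro i
    apply eventually_abs_le_of_continuous (by fun_prop)
    norm_num
  have hone : ∀ᶠ ρ in nhds (0:ℝ), |ρ| ≤ 1 := by
    apply eventually_abs_le_of_continuous continuous_id
    norm_num
  have hlog2 : (0:ℝ) < Real.log 2 := Real.log_pos one_lt_two
  refine ⟨(2*(|T|+Qb)^2 + (∑ i, 2*(a i)^2) + Qb)/Real.log 2, ?_⟩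
  filter_upwards [self_mem_nhdsWithin, hq0.filter_mono nhdsWithin_le_nhds,
    hu0.filter_mono nhdsWithin_le_nhds, ha0.filter_mono nhdsWithin_le_nhds,
    hone.filter_mono nhdsWithin_le_nhds] with ρ hρpos hqρ huρ haρ honeρ
  have hρ : (0:ℝ) < ρ := hρpos
  have hρ1 : ρ ≤ 1 := by rwa [abs_of_pos hρ] at honeρ
  have hρ2 : (0:ℝ) < ρ^2 := by positivity
  -- rewrite the three terms
  rw [hbr ρ, rateDPC]
  have hsum : ∀ i : Fin M, Real.logb 2 (1 + ρ * lam i * Complex.normSq (L i i)) =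
      Real.logb 2 (1 + a i * ρ) := by
    intro i; congr 1; rw [haa]; ring
  rw [Finset.sum_congr rfl (fun i _ => hsum i)]
  simp only [Real.logb]
  rw [← Finset.sum_div]
  set inner : ℝ := Real.log (1 + u ρ) - (∑ i, Real.log (1 + a i * ρ)) - ρ * S with hinner
  have hexpr : Real.log (1 + u ρ) / Real.log 2 - (∑ i, Real.log (1 + a i * ρ)) / Real.log 2 -
      ρ / Real.log 2 * S = inner / Real.log 2 := by
    rw [hinner]; ring
  rw [hexpr]
  -- the key decomposition
  have hdec : inner = (Real.log (1 + u ρ) - u ρ)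
      - (∑ i, (Real.log (1 + a i * ρ) - a i * ρ)) + ρ^2 * q ρ := by
    rw [hinner, Finset.sum_sub_distrib]
    have : u ρ - (∑ i, a i * ρ) - ρ * S = ρ^2 * q ρ := by
      rw [hu, ← Finset.sum_mul, hTS]; ring
    nlinarith [this]
  -- bounds
  have hE : |Real.log (1 + u ρ) - u ρ| ≤ 2 * (u ρ)^2 := log_one_add_sub_le' huρ
  have hEi : |∑ i, (Real.log (1 + a i * ρ) - a i * ρ)| ≤ ρ^2 * ∑ i, 2*(a i)^2 := by
    calc |∑ i, (Real.log (1 + a i * ρ) - a i * ρ)|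
        ≤ ∑ i, |Real.log (1 + a i * ρ) - a i * ρ| := Finset.abs_sum_le_sum_abs _ _
      _ ≤ ∑ i, 2 * (a i * ρ)^2 := Finset.sum_le_sum (fun i _ => log_one_add_sub_le' (haρ i))
      _ = ρ^2 * ∑ i, 2*(a i)^2 := by rw [Finset.mul_sum]; apply Finset.sum_congr rfl; intros; ring
  clear_value inner
  clear hD hA hDh hAeq htr hpol hrow heta hbr hre hQ hLtri hLdiag hinner hexpr hsum hqc huc hq0 hu0 ha0 hone
  clear hq haa hS hT hTS
  clear hlam
  clear D A pol L Q lam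
  have hub : |u ρ| ≤ ρ * (|T| + Qb) := by
    rw [hu]
    have hr2 : ρ^2 ≤ ρ := by nlinarith
    have h2 : |q ρ| * ρ^2 ≤ Qb * ρ := by nlinarith [abs_nonneg (q ρ)]
    calc |T * ρ + q ρ * ρ^2| ≤ |T * ρ| + |q ρ * ρ^2| := abs_add_le _ _
      _ = |T| * ρ + |q ρ| * ρ^2 := by
          rw [abs_mul, abs_mul, abs_of_pos hρ, abs_of_pos hρ2]
      _ ≤ ρ * (|T| + Qb) := by nlinarith [abs_nonneg T]
  have hu2 : (u ρ)^2 ≤ ρ^2 * (|T| + Qb)^2 := by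
    have h1 : (u ρ)^2 = |u ρ|^2 := (sq_abs _).symm
    have h2 : |u ρ| ^ 2 ≤ (ρ * (|T| + Qb))^2 := pow_le_pow_left₀ (abs_nonneg _) hub 2
    rw [h1]
    calc |u ρ|^2 ≤ (ρ * (|T| + Qb))^2 := h2
      _ = ρ^2 * (|T| + Qb)^2 := by ring
  set X : ℝ := Real.log (1 + u ρ) - u ρ with hX
  set Y : ℝ := ∑ i, (Real.log (1 + a i * ρ) - a i * ρ) with hY
  set Z : ℝ := ρ^2 * q ρ with hZdef
  set W : ℝ := ∑ i, 2*(a i)^2 with hW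
  have hZ : |Z| ≤ ρ^2 * Qb := by
    rw [hZdef, abs_mul, abs_of_pos hρ2]
    exact mul_le_mul_of_nonneg_left hqρ hρ2.le
  have h2u : 2 * (u ρ)^2 ≤ ρ^2 * (2*(|T|+Qb)^2) := by nlinarith [hu2]
  have hinb : |inner| ≤ ρ^2 * (2*(|T|+Qb)^2 + W + Qb) := by
    rw [hdec]
    have t1 : |X - Y + Z| ≤ |X| + |Y| + |Z| :=
      (abs_add_le _ _).trans (add_le_add_left (abs_sub _ _) _)
    have t2 : ρ^2 * (2*(|T|+Qb)^2 + W + Qb)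
        = ρ^2 * (2*(|T|+Qb)^2) + ρ^2 * W + ρ^2 * Qb := by ring
    rw [t2]
    have hEX : |X| ≤ ρ^2 * (2*(|T|+Qb)^2) := le_trans hE h2u
    have hEY : |Y| ≤ ρ^2 * W := hEi
    linarith
  -- conclude
  have habs : |(ρ^2)⁻¹ * (inner / Real.log 2)| = |inner| / (ρ^2 * Real.log 2) := by
    rw [abs_mul, abs_div, abs_inv, abs_of_pos hρ2, abs_of_pos hlog2]
    ring
  rw [habs, div_le_div_iff₀ (by positivity) hlog2]
  calc |inner| * Real.log 2 ≤ (ρ^2 * (2*(|T|+Qb)^2 + W + Qb)) * Real.log 2 :=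
        mul_le_mul_of_nonneg_right hinb hlog2.le
    _ = (2*(|T|+Qb)^2 + W + Qb) * (ρ^2 * Real.log 2) := by ring
end

section
/- As ρ → 0⁺, the gap between the benchmark rate and the equal-power ZFBF-SUS sum rate satisfies C(ρ) − R_BF(ρ) = (ρ/ln 2) · Σ_{i=1}^{M} (1 + η_i − 1/(1 + κ_i)) λ_i |l_{i,i}|² + O(ρ²); that is, the function ρ ↦ ρ^{-2} · ( C(ρ) − R_BF(ρ) − (ρ/ln 2) Σ_{i=1}^{M} (1 + η_i − 1/(1 + κ_i)) λ_i |l_{i,i}|² ) is bounded as ρ → 0⁺. -/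
open Matrix Filter Finset MeasureTheory

lemma log_one_add_taylor {x : ℝ} (hx : -2⁻¹ ≤ x) :
    |Real.log (1 + x) - x| ≤ 2 * x ^ 2 := by
  have h1 : (0:ℝ) < 1 + x := by linarith
  have hub : Real.log (1 + x) ≤ x := by
    have := Real.log_le_sub_one_of_pos h1
    linarith
  have h2 : (0:ℝ) < (1 + x)⁻¹ := by positivity
  have hlb' := Real.log_le_sub_one_of_pos h2
  rw [Real.log_inv] at hlb'
  have hinv : (1 + x) * (1 + x)⁻¹ = 1 := mul_inv_cancel₀ (ne_of_gt h1)
  have h12x : (0:ℝ) ≤ 1 + 2 * x := by linarith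
  rw [abs_le]
  constructor
  · nlinarith [mul_nonneg (sq_nonneg x) h12x, hinv, h1, sq_nonneg x]
  · nlinarith [sq_nonneg x]

set_option maxHeartbeats 2000000 in
/-- Low-SNR gap for ZFBF-SUS:
`C(ρ) − R_BF(ρ) = (ρ/ln 2) Σ_i (1 + η_i − 1/(1+κ_i)) λ_i |l_{i,i}|² + O(ρ²)` as `ρ → 0⁺`. -/
theorem lowSNR_gap_ZFBF
    (M m : ℕ) (hM : 1 ≤ M) (hm : M ≤ m)
    (lam : Fin M → ℝ) (hlam : ∀ i, 0 < lam i)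
    (L : Matrix (Fin M) (Fin M) ℂ)
    (hLtri : ∀ i j : Fin M, i < j → L i j = 0)
    (hLdiag : ∀ i : Fin M, L i i ≠ 0)
    (Q : Matrix (Fin M) (Fin m) ℂ) (hQ : Q * Qᴴ = 1) :
    ∃ B : ℝ, ∀ᶠ ρ : ℝ in nhdsWithin (0 : ℝ) (Set.Ioi 0),
      |(ρ ^ 2)⁻¹ * (benchRate M m lam L Q ρ - rateBF M lam L ρ -
        (ρ / Real.log 2) *
          ∑ i, (1 + eta M L i - 1 / (1 + kappa M L i)) *
            (lam i * Complex.normSq (L i i)))| ≤ B := by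
  classical
  -- triangular structure of L and L⁻¹
  have hBT : L.BlockTriangular OrderDual.toDual := fun i j h => hLtri i j h
  have hdetL : L.det = ∏ i, L i i := Matrix.det_of_lowerTriangular L hBT
  have hdetU : IsUnit L.det := by
    rw [hdetL]
    exact isUnit_iff_ne_zero.mpr (Finset.prod_ne_zero_iff.mpr fun i _ => hLdiag i)
  haveI := L.invertibleOfIsUnitDet hdetU
  have hTtri : ∀ i j : Fin M, i < j → L⁻¹ i j = 0 := fun i j h =>
    Matrix.blockTriangular_inv_of_blockTriangular hBT h
  have hdiaginv : ∀ i, L i i * L⁻¹ i i = 1 := by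
    intro i
    have h1 : (L * L⁻¹) i i = 1 := by
      rw [Matrix.mul_nonsing_inv L hdetU]; simp [Matrix.one_apply]
    rw [Matrix.mul_apply, Finset.sum_eq_single i ?h0 ?h1] at h1
    · exact h1
    case h0 =>
      intro j _ hj
      rcases lt_or_gt_of_ne hj with h|h
      · rw [hTtri j i h, mul_zero]
      · rw [hLtri i j h, zero_mul]
    case h1 => intro h; exact absurd (Finset.mem_univ i) h
  have hnnt : ∀ i, Complex.normSq (L i i) * Complex.normSq (L⁻¹ i i) = 1 := by
    intro i
    rw [← Complex.normSq_mul, hdiaginv i, Complex.normSq_one]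
  have hntpos : ∀ i, 0 < Complex.normSq (L⁻¹ i i) := by
    intro i
    rcases (Complex.normSq_nonneg (L⁻¹ i i)).lt_or_eq with h|h
    · exact h
    · exfalso; have := hnnt i; rw [← h, mul_zero] at this; exact zero_ne_one this
  have hnpos : ∀ i, 0 < Complex.normSq (L i i) :=
    fun i => Complex.normSq_pos.mpr (hLdiag i)
  have hkapnn : ∀ i, 0 ≤ kappa M L i := by
    intro i
    refine Finset.sum_nonneg fun j _ => div_nonneg (Complex.normSq_nonneg _)
      (Complex.normSq_nonneg _)
  have hketann : ∀ i, 0 ≤ eta M L i := by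
    intro i
    refine Finset.sum_nonneg fun j _ => div_nonneg (Complex.normSq_nonneg _)
      (Complex.normSq_nonneg _)
  -- column/row norm identities
  have hcol : ∀ i, (∑ j, Complex.normSq (L⁻¹ j i))
      = Complex.normSq (L⁻¹ i i) * (1 + kappa M L i) := by
    intro i
    have hterm : ∀ j ∈ Finset.univ.filter (fun j => i < j),
        Complex.normSq (L⁻¹ i i) * (Complex.normSq (L⁻¹ j i) / Complex.normSq (L⁻¹ i i))
          = Complex.normSq (L⁻¹ j i) := fun j _ => by
      rw [mul_comm, div_mul_cancel₀ _ (ne_of_gt (hntpos i))]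
    have hrest : ∑ j ∈ Finset.univ.filter (fun j => ¬ i < j), Complex.normSq (L⁻¹ j i)
        = Complex.normSq (L⁻¹ i i) := by
      rw [Finset.sum_eq_single_of_mem i (by simp)]
      intro j hj hne
      simp only [Finset.mem_filter] at hj
      have hji : j < i := lt_of_le_of_ne (not_lt.mp hj.2) hne
      rw [hTtri j i hji, Complex.normSq_zero]
    have hsplit := Finset.sum_filter_add_sum_filter_not Finset.univ (fun j => i < j)
      (fun j => Complex.normSq (L⁻¹ j i))
    rw [kappa, mul_add, mul_one, Finset.mul_sum, Finset.sum_congr rfl hterm]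
    linarith [hsplit]
  have hrow : ∀ i, (∑ j, Complex.normSq (L i j))
      = Complex.normSq (L i i) * (1 + eta M L i) := by
    intro i
    have hterm : ∀ j ∈ Finset.univ.filter (fun j => j < i),
        Complex.normSq (L i i) * (Complex.normSq (L i j) / Complex.normSq (L i i))
          = Complex.normSq (L i j) := fun j _ => by
      rw [mul_comm, div_mul_cancel₀ _ (ne_of_gt (hnpos i))]
    have hrest : ∑ j ∈ Finset.univ.filter (fun j => ¬ j < i), Complex.normSq (L i j)
        = Complex.normSq (L i i) := by
      rw [Finset.sum_eq_single_of_mem i (by simp)]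
      intro j hj hne
      simp only [Finset.mem_filter] at hj
      have hij : i < j := lt_of_le_of_ne (not_lt.mp hj.2) (Ne.symm hne)
      rw [hLtri i j hij, Complex.normSq_zero]
    have hsplit := Finset.sum_filter_add_sum_filter_not Finset.univ (fun j => j < i)
      (fun j => Complex.normSq (L i j))
    rw [eta, mul_add, mul_one, Finset.mul_sum, Finset.sum_congr rfl hterm]
    linarith [hsplit]
  -- matrix algebra: A = D (L Lᴴ) D and the trace
  set D : Matrix (Fin M) (Fin M) ℂ :=
    Matrix.diagonal (fun i => (Real.sqrt (lam i) : ℂ)) with hD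
  set A : Matrix (Fin M) (Fin M) ℂ := (D * L * Q) * (D * L * Q)ᴴ with hA
  have hDH : Dᴴ = D := by
    have hstar : (star fun i : Fin M => ((Real.sqrt (lam i) : ℝ) : ℂ))
        = fun i : Fin M => ((Real.sqrt (lam i) : ℝ) : ℂ) := by
      funext i
      rw [Pi.star_apply, Complex.star_def, Complex.conj_ofReal]
    rw [hD, Matrix.diagonal_conjTranspose, hstar]
  have hAeq : A = D * (L * Lᴴ) * D := by
    rw [hA, Matrix.conjTranspose_mul, Matrix.conjTranspose_mul, hDH]
    calc D * L * Q * (Qᴴ * (Lᴴ * D))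
        = D * L * (Q * Qᴴ) * (Lᴴ * D) := by simp only [Matrix.mul_assoc]
      _ = D * (L * Lᴴ) * D := by rw [hQ, Matrix.mul_one]; simp only [Matrix.mul_assoc]
  set T : ℝ := ∑ i, lam i * ∑ j, Complex.normSq (L i j) with hT
  have htr : A.trace = (T : ℂ) := by
    rw [hAeq, Matrix.trace, hT]
    push_cast
    apply Finset.sum_congr rfl
    intro i _
    simp only [Matrix.diag, Matrix.mul_diagonal, Matrix.diagonal_mul, hD]
    simp only [Matrix.mul_apply, Matrix.conjTranspose_apply]
    have h1 : (∑ k, L i k * star (L i k)) = ((∑ j, Complex.normSq (L i j) : ℝ) : ℂ) := by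
      push_cast
      exact Finset.sum_congr rfl fun k _ => by rw [Complex.star_def, Complex.mul_conj]
    rw [h1, show ((lam i : ℝ) : ℂ) = (Real.sqrt (lam i) : ℂ) * (Real.sqrt (lam i) : ℂ) by
      rw [← Complex.ofReal_mul, Real.mul_self_sqrt (hlam i).le]]
    push_cast
    ring
  -- determinant expansion
  set P : Polynomial ℂ :=
    (Matrix.det (1 + (Polynomial.X : Polynomial ℂ) • A.map Polynomial.C)).divX.divX with hP
  have hdet : ∀ ρ : ℝ, ((1 + (ρ:ℂ) • A).det).re
      = 1 + T * ρ + (P.eval (ρ:ℂ)).re * ρ ^ 2 := by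
    intro ρ
    rw [Matrix.det_one_add_smul, htr, ← hP]
    have h2 : ((ρ:ℂ))^2 = ((ρ^2 : ℝ) : ℂ) := by push_cast; ring
    rw [h2]
    simp only [Complex.add_re, Complex.mul_re, Complex.one_re, Complex.one_im,
      Complex.ofReal_re, Complex.ofReal_im]
    ring
  -- bound on the polynomial remainder on [0,1]
  obtain ⟨Qb, hQb⟩ : ∃ Qb : ℝ, ∀ ρ ∈ Set.Icc (0:ℝ) 1, |(P.eval ((ρ:ℝ):ℂ)).re| ≤ Qb := by
    have hcont : ContinuousOn (fun ρ : ℝ => (P.eval ((ρ:ℝ):ℂ)).re) (Set.Icc 0 1) :=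
      (Complex.continuous_re.comp (P.continuous.comp Complex.continuous_ofReal)).continuousOn
    obtain ⟨C, hC⟩ := isCompact_Icc.exists_bound_of_continuousOn hcont
    exact ⟨C, fun ρ hρ => by simpa [Real.norm_eq_abs] using hC ρ hρ⟩
  have hQb0 : 0 ≤ Qb := le_trans (abs_nonneg _) (hQb 0 ⟨le_refl 0, zero_le_one⟩)
  -- the linear coefficients
  obtain ⟨b, hb⟩ : ∃ b : Fin M → ℝ,
      b = fun i => lam i / ∑ j, Complex.normSq (L⁻¹ j i) := ⟨_, rfl⟩
  have hbi : ∀ i, b i = lam i / ∑ j, Complex.normSq (L⁻¹ j i) := fun i => by rw [hb]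
  have hbpos : ∀ i, 0 < b i := by
    intro i
    rw [hbi i]
    refine div_pos (hlam i) ?_
    rw [hcol i]
    have := hkapnn i
    have := hntpos i
    nlinarith
  have hK : (∑ i, (1 + eta M L i - 1 / (1 + kappa M L i)) * (lam i * Complex.normSq (L i i)))
      = T - ∑ i, b i := by
    rw [hT, ← Finset.sum_sub_distrib]
    apply Finset.sum_congr rfl
    intro i _
    have hk1 : (0:ℝ) < 1 + kappa M L i := by have := hkapnn i; linarith
    have hbeq : b i = lam i * Complex.normSq (L i i) / (1 + kappa M L i) := by
      rw [hbi i]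
      rw [hcol i, div_eq_div_iff (ne_of_gt (mul_pos (hntpos i) hk1)) (ne_of_gt hk1)]
      linear_combination (-(lam i * (1 + kappa M L i))) * hnnt i
    rw [hrow i, hbeq]
    field_simp
  -- pointwise rewriting of the two rates
  have hlog2 : (0:ℝ) < Real.log 2 := Real.log_pos one_lt_two
  have hbench : ∀ ρ : ℝ, benchRate M m lam L Q ρ
      = Real.log (1 + (T * ρ + (P.eval ((ρ:ℝ):ℂ)).re * ρ ^ 2)) / Real.log 2 := by
    intro ρ
    rw [benchRate, ← Real.log_div_log, ← hD, ← hA, hdet ρ]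
    ring_nf
  have hrate : ∀ ρ : ℝ, rateBF M lam L ρ
      = (∑ i, Real.log (1 + ρ * b i)) / Real.log 2 := by
    intro ρ
    rw [rateBF, Finset.sum_div]
    apply Finset.sum_congr rfl
    intro i _
    rw [← Real.log_div_log, hbi i, mul_div_assoc]
  clear_value D A P T
  -- choose the bound and the neighborhood
  set Cc : ℝ := 2 * (|T| + Qb) ^ 2 + Qb + ∑ i, 2 * (b i) ^ 2 with hCc
  refine ⟨Cc / Real.log 2, ?_⟩
  have hδpos : (0:ℝ) < min 1 (1 / (2 * (|T| + Qb + 1))) := by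
    refine lt_min one_pos ?_
    positivity
  filter_upwards [Ioo_mem_nhdsGT_of_mem (Set.left_mem_Ico.mpr hδpos)] with ρ hρ
  obtain ⟨hρ0, hρδ⟩ := hρ
  have hρ1 : ρ ≤ 1 := le_of_lt (lt_of_lt_of_le hρδ (min_le_left _ _))
  have hρsmall : ρ * (|T| + Qb + 1) ≤ 2⁻¹ := by
    have h2 : ρ < 1 / (2 * (|T| + Qb + 1)) := lt_of_lt_of_le hρδ (min_le_right _ _)
    have h3 : (0:ℝ) < |T| + Qb + 1 := by positivity
    rw [lt_div_iff₀ (by positivity)] at h2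
    nlinarith
  obtain ⟨q, hq⟩ : ∃ q : ℝ, q = (P.eval ((ρ:ℝ):ℂ)).re := ⟨_, rfl⟩
  have hqb : |q| ≤ Qb := by rw [hq]; exact hQb ρ ⟨hρ0.le, hρ1⟩
  obtain ⟨x, hx⟩ : ∃ x : ℝ, x = T * ρ + q * ρ ^ 2 := ⟨_, rfl⟩
  have hbenchx : benchRate M m lam L Q ρ = Real.log (1 + x) / Real.log 2 := by
    rw [hbench ρ, ← hq, ← hx]
  have hxabs : |x| ≤ ρ * (|T| + Qb) := by
    calc |x| = |T * ρ + q * ρ ^ 2| := by rw [hx]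
      _ ≤ |T * ρ| + |q * ρ ^ 2| := abs_add_le _ _
      _ = |T| * ρ + |q| * ρ ^ 2 := by
          rw [abs_mul, abs_mul, abs_of_pos hρ0, abs_of_pos (by positivity : (0:ℝ) < ρ ^ 2)]
      _ ≤ |T| * ρ + Qb * ρ := by
          have hρ2 : ρ ^ 2 ≤ ρ := by nlinarith
          have : |q| * ρ ^ 2 ≤ Qb * ρ :=
            mul_le_mul hqb hρ2 (by positivity) hQb0
          linarith
      _ = ρ * (|T| + Qb) := by ring
  have hxhalf : -2⁻¹ ≤ x := by
    have h1 : |x| ≤ 2⁻¹ := by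
      refine le_trans hxabs (le_trans ?_ hρsmall)
      nlinarith
    linarith [neg_abs_le x]
  -- the key logarithmic bounds
  have hbenchbound : |Real.log (1 + x) - x| ≤ 2 * x ^ 2 := log_one_add_taylor hxhalf
  have hratebound : ∀ i, |Real.log (1 + ρ * b i) - ρ * b i| ≤ 2 * (ρ * b i) ^ 2 := by
    intro i
    refine log_one_add_taylor ?_
    have := (hbpos i).le
    nlinarith
  -- rewrite the expression
  have hE : benchRate M m lam L Q ρ - rateBF M lam L ρ -
      (ρ / Real.log 2) * ∑ i, (1 + eta M L i - 1 / (1 + kappa M L i)) *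
        (lam i * Complex.normSq (L i i))
      = ((Real.log (1 + x) - x) + q * ρ ^ 2
          - ∑ i, (Real.log (1 + ρ * b i) - ρ * b i)) / Real.log 2 := by
    rw [hbenchx, hrate ρ, hK, Finset.sum_sub_distrib, ← Finset.mul_sum, hx,
      div_mul_eq_mul_div, ← sub_div, ← sub_div]
    congr 1
    ring
  rw [hE]
  have hinner : |(Real.log (1 + x) - x) + q * ρ ^ 2
      - ∑ i, (Real.log (1 + ρ * b i) - ρ * b i)| ≤ ρ ^ 2 * Cc := by
    have h1 : |∑ i, (Real.log (1 + ρ * b i) - ρ * b i)| ≤ ∑ i, 2 * (ρ * b i) ^ 2 :=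
      le_trans (Finset.abs_sum_le_sum_abs _ _) (Finset.sum_le_sum fun i _ => hratebound i)
    have h2 : |q * ρ ^ 2| ≤ Qb * ρ ^ 2 := by
      rw [abs_mul, abs_of_pos (by positivity : (0:ℝ) < ρ ^ 2)]
      exact mul_le_mul_of_nonneg_right hqb (by positivity)
    have h3 : 2 * x ^ 2 ≤ ρ ^ 2 * (2 * (|T| + Qb) ^ 2) := by
      have hx2 : x ^ 2 ≤ (ρ * (|T| + Qb)) ^ 2 := by
        rw [← sq_abs x]
        exact pow_le_pow_left₀ (abs_nonneg x) hxabs 2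
      have heq : (ρ * (|T| + Qb)) ^ 2 = ρ ^ 2 * (|T| + Qb) ^ 2 := by ring
      linarith
    have h4 : ∑ i, 2 * (ρ * b i) ^ 2 = ρ ^ 2 * ∑ i, 2 * (b i) ^ 2 := by
      rw [Finset.mul_sum]
      exact Finset.sum_congr rfl fun i _ => by ring
    have h5 : |(Real.log (1 + x) - x) + q * ρ ^ 2
        - ∑ i, (Real.log (1 + ρ * b i) - ρ * b i)|
        ≤ |Real.log (1 + x) - x| + |q * ρ ^ 2| + |∑ i, (Real.log (1 + ρ * b i) - ρ * b i)| := by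
      calc |(Real.log (1 + x) - x) + q * ρ ^ 2 - ∑ i, (Real.log (1 + ρ * b i) - ρ * b i)|
          ≤ |(Real.log (1 + x) - x) + q * ρ ^ 2| + |∑ i, (Real.log (1 + ρ * b i) - ρ * b i)| :=
            abs_sub _ _
        _ ≤ _ := by
            have := abs_add_le (Real.log (1 + x) - x) (q * ρ ^ 2)
            linarith
    have h6 : ρ ^ 2 * Cc = ρ ^ 2 * (2 * (|T| + Qb) ^ 2) + Qb * ρ ^ 2
        + ρ ^ 2 * ∑ i, 2 * (b i) ^ 2 := by rw [hCc]; ring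
    linarith [hbenchbound, h1, h2, h3, h4, h5, h6]
  rw [abs_mul, abs_inv, abs_of_pos (by positivity : (0:ℝ) < ρ ^ 2), abs_div,
    abs_of_pos hlog2]
  calc (ρ ^ 2)⁻¹ * (|(Real.log (1 + x) - x) + q * ρ ^ 2
        - ∑ i, (Real.log (1 + ρ * b i) - ρ * b i)| / Real.log 2)
      ≤ (ρ ^ 2)⁻¹ * ((ρ ^ 2 * Cc) / Real.log 2) := by gcongr
    _ = Cc / Real.log 2 := by
        field_simp
end

section
/- As ρ → ∞, the difference between the equal-power ZFDPC-SUS and ZFBF-SUS sum rates satisfies R_DPC(ρ) − R_BF(ρ) = Σ_{i=1}^{M} log₂(1 + κ_i) + O(ρ^{-1}); that is, the function ρ ↦ ρ · ( R_DPC(ρ) − R_BF(ρ) − Σ_{i=1}^{M} log₂(1 + κ_i) ) is bounded as ρ → ∞. -/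
open Matrix Filter Finset MeasureTheory

private lemma key_bound (a c ρ : ℝ) (ha : 0 < a) (hc : 1 ≤ c) (hρ : 0 ≤ ρ) :
    |ρ * (Real.logb 2 (1 + ρ * a) - Real.logb 2 (1 + ρ * a / c) -
      Real.logb 2 c)| ≤ (c - 1) / (a * Real.log 2) := by
  have hc0 : 0 < c := lt_of_lt_of_le one_pos hc
  have hx : 0 ≤ ρ * a := mul_nonneg hρ ha.le
  have h1 : 0 < 1 + ρ * a := by linarith
  have h2 : 0 < 1 + ρ * a / c := by positivity
  have hcx : 0 < c + ρ * a := by linarith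
  have hlog2 : 0 < Real.log 2 := Real.log_pos one_lt_two
  have hcomb : Real.logb 2 (1 + ρ * a) - Real.logb 2 (1 + ρ * a / c) - Real.logb 2 c
      = Real.logb 2 ((1 + ρ * a) / (c + ρ * a)) := by
    rw [Real.logb, Real.logb, Real.logb, Real.logb, ← sub_div, ← sub_div,
      ← Real.log_div h1.ne' h2.ne', ← Real.log_div (by positivity) hc0.ne']
    congr 2
    field_simp
  have hneg : Real.log ((1 + ρ * a) / (c + ρ * a)) ≤ 0 :=
    Real.log_nonpos (by positivity) (by rw [div_le_one hcx]; linarith)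
  have hub : -Real.log ((1 + ρ * a) / (c + ρ * a)) ≤ (c - 1) / (1 + ρ * a) := by
    rw [← Real.log_inv, inv_div]
    calc Real.log ((c + ρ * a) / (1 + ρ * a)) ≤ (c + ρ * a) / (1 + ρ * a) - 1 :=
          Real.log_le_sub_one_of_pos (by positivity)
      _ = (c - 1) / (1 + ρ * a) := by field_simp; ring
  have step1 : ρ * -Real.log ((1 + ρ * a) / (c + ρ * a)) ≤ (c - 1) / a := by
    have h3 : ρ * -Real.log ((1 + ρ * a) / (c + ρ * a)) ≤ ρ * ((c - 1) / (1 + ρ * a)) :=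
      mul_le_mul_of_nonneg_left hub hρ
    refine h3.trans ?_
    rw [mul_div_assoc', div_le_div_iff₀ h1 ha]
    nlinarith [mul_nonneg hx (sub_nonneg.2 hc)]
  rw [hcomb, abs_mul, abs_of_nonneg hρ, Real.logb, abs_div,
    abs_of_nonneg hlog2.le, abs_of_nonpos hneg, ← mul_div_assoc, ← div_div]
  gcongr

/-- High-SNR difference between ZFDPC-SUS and ZFBF-SUS:
`R_DPC(ρ) − R_BF(ρ) = Σ_i log₂(1 + κ_i) + O(ρ⁻¹)` as `ρ → ∞`. -/
theorem highSNR_diff_ZFDPC_ZFBF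
    (M m : ℕ) (hM : 1 ≤ M) (hm : M ≤ m)
    (lam : Fin M → ℝ) (hlam : ∀ i, 0 < lam i)
    (L : Matrix (Fin M) (Fin M) ℂ)
    (hLtri : ∀ i j : Fin M, i < j → L i j = 0)
    (hLdiag : ∀ i : Fin M, L i i ≠ 0)
    (Q : Matrix (Fin M) (Fin m) ℂ) (hQ : Q * Qᴴ = 1) :
    ∃ B : ℝ, ∀ᶠ ρ : ℝ in atTop,
      |ρ * (rateDPC M lam L ρ - rateBF M lam L ρ -
        ∑ i, Real.logb 2 (1 + kappa M L i))| ≤ B := by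
  classical
  have hLbt : L.BlockTriangular OrderDual.toDual := fun i j h => hLtri i j h
  have hdetu : IsUnit L.det := by
    rw [Matrix.det_of_lowerTriangular L hLbt]
    exact isUnit_iff_ne_zero.2 (Finset.prod_ne_zero_iff.2 fun i _ => hLdiag i)
  haveI : Invertible L := L.invertibleOfIsUnitDet hdetu
  have hTL : L⁻¹ * L = 1 := Matrix.nonsing_inv_mul L hdetu
  have hTbt : (L⁻¹).BlockTriangular OrderDual.toDual :=
    Matrix.blockTriangular_inv_of_blockTriangular hLbt
  have hTlow : ∀ j i : Fin M, j < i → L⁻¹ j i = 0 := fun j i h => hTbt h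
  have hTdiag : ∀ i, L⁻¹ i i * L i i = 1 := by
    intro i
    have h := congrFun (congrFun hTL i) i
    rw [Matrix.mul_apply, Finset.sum_eq_single i] at h
    · simpa [Matrix.one_apply] using h
    · intro k _ hk
      rcases lt_or_gt_of_ne hk with hki | hik
      · rw [hLtri k i hki, mul_zero]
      · rw [hTbt hik, zero_mul]
    · simp
  have hTn : ∀ i, Complex.normSq (L⁻¹ i i) * Complex.normSq (L i i) = 1 := by
    intro i
    rw [← Complex.normSq_mul, hTdiag i, Complex.normSq_one]
  have hTne : ∀ i, L⁻¹ i i ≠ 0 := fun i h => by simpa [h] using hTdiag i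
  have hTnpos : ∀ i, 0 < Complex.normSq (L⁻¹ i i) :=
    fun i => Complex.normSq_pos.2 (hTne i)
  have hLnpos : ∀ i, 0 < Complex.normSq (L i i) :=
    fun i => Complex.normSq_pos.2 (hLdiag i)
  have hknn : ∀ i, 0 ≤ kappa M L i := by
    intro i
    refine Finset.sum_nonneg fun j _ => div_nonneg (Complex.normSq_nonneg _) (Complex.normSq_nonneg _)
  have hS : ∀ i, (∑ j, Complex.normSq (L⁻¹ j i))
      = (1 + kappa M L i) / Complex.normSq (L i i) := by
    intro i
    have hsplit : (∑ j, Complex.normSq (L⁻¹ j i))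
        = (∑ j ∈ Finset.univ.filter (fun j => i < j), Complex.normSq (L⁻¹ j i))
          + ∑ j ∈ Finset.univ.filter (fun j => ¬ i < j), Complex.normSq (L⁻¹ j i) :=
      (Finset.sum_filter_add_sum_filter_not _ _ _).symm
    have hsecond : (∑ j ∈ Finset.univ.filter (fun j => ¬ i < j), Complex.normSq (L⁻¹ j i))
        = Complex.normSq (L⁻¹ i i) := by
      rw [Finset.sum_eq_single_of_mem i (by simp)]
      intro j hj hji
      rw [hTlow j i (lt_of_le_of_ne (not_lt.1 (Finset.mem_filter.1 hj).2) hji)]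
      simp
    have hk : kappa M L i
        = (∑ j ∈ Finset.univ.filter (fun j => i < j), Complex.normSq (L⁻¹ j i))
          / Complex.normSq (L⁻¹ i i) := by
      rw [kappa, Finset.sum_div]
    rw [hsplit, hsecond, hk]
    have h2 := (hTnpos i).ne'
    have hn : Complex.normSq (L i i) = (Complex.normSq (L⁻¹ i i))⁻¹ :=
      eq_inv_of_mul_eq_one_left (by rw [mul_comm]; exact hTn i)
    rw [hn, div_inv_eq_mul, add_mul, one_mul, div_mul_cancel₀ _ h2, add_comm]
  set a : Fin M → ℝ := fun i => lam i * Complex.normSq (L i i) with ha_def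
  have hapos : ∀ i, 0 < a i := fun i => mul_pos (hlam i) (hLnpos i)
  refine ⟨∑ i, (1 + kappa M L i - 1) / (a i * Real.log 2), ?_⟩
  filter_upwards [eventually_ge_atTop (0 : ℝ)] with ρ hρ
  have hrw : rateDPC M lam L ρ - rateBF M lam L ρ - ∑ i, Real.logb 2 (1 + kappa M L i)
      = ∑ i, (Real.logb 2 (1 + ρ * a i) - Real.logb 2 (1 + ρ * a i / (1 + kappa M L i))
          - Real.logb 2 (1 + kappa M L i)) := by
    rw [rateDPC, rateBF, ← Finset.sum_sub_distrib, ← Finset.sum_sub_distrib]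
    refine Finset.sum_congr rfl fun i _ => ?_
    have e1 : ρ * lam i * Complex.normSq (L i i) = ρ * a i := by rw [ha_def]; ring
    have e2 : ρ * lam i / (∑ j, Complex.normSq (L⁻¹ j i)) = ρ * a i / (1 + kappa M L i) := by
      rw [hS i, ha_def]
      have h3 := (hLnpos i).ne'
      have h4 : (0:ℝ) < 1 + kappa M L i := by linarith [hknn i]
      field_simp
    rw [e1, e2]
  rw [hrw, Finset.mul_sum]
  refine (Finset.abs_sum_le_sum_abs _ _).trans (Finset.sum_le_sum fun i _ => ?_)
  exact key_bound (a i) (1 + kappa M L i) ρ (hapos i) (by linarith [hknn i]) hρ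
end

section
/- Suppose 0 < δ < 1/(M−1). For all integers n, k with 2 ≤ n ≤ M−1 and 1 ≤ k ≤ n−1, φ_n(1) = [ ∏_{j=0}^{k-1} (M − n + j) ]^{-1} · Σ_{i=0}^{k} (−1)^i C(k, i) φ_{n-k}(1 − i δ), where C(k,i) denotes the binomial coefficient. -/
open MeasureTheory Finset

/-- `φ_n(z) = ∫_{[0,δ]^n} (z − t_1 − ⋯ − t_n)^{M−n−1} dt`, with `φ_0(z) = z^{M−1}`. -/
noncomputable def phi (M : ℕ) (δ : ℝ) : ℕ → ℝ → ℝ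
  | 0, z => z ^ (M - 1)
  | (n + 1), z =>
      ∫ t in {t : Fin (n + 1) → ℝ | ∀ i, t i ∈ Set.Icc (0 : ℝ) δ},
        (z - ∑ i, t i) ^ (M - (n + 1) - 1) ∂volume

lemma int_Icc (p : ℕ) (w δ : ℝ) (hδ : 0 ≤ δ) :
    ∫ x in Set.Icc (0:ℝ) δ, (w - x) ^ p =
      (w ^ (p+1) - (w - δ) ^ (p+1)) / (p+1) := by
  rw [MeasureTheory.integral_Icc_eq_integral_Ioc, ← intervalIntegral.integral_of_le hδ,
    intervalIntegral.integral_comp_sub_left (fun x => x ^ p) w, integral_pow, sub_zero]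

lemma cube_compact (n : ℕ) (δ : ℝ) :
    IsCompact {t : Fin n → ℝ | ∀ i, t i ∈ Set.Icc (0 : ℝ) δ} := by
  have : {t : Fin n → ℝ | ∀ i, t i ∈ Set.Icc (0 : ℝ) δ}
      = Set.pi Set.univ (fun _ => Set.Icc (0:ℝ) δ) := by
    ext t; simp [Set.mem_pi, Pi.le_def, forall_and]
  rw [this]
  exact isCompact_univ_pi (fun _ => isCompact_Icc)

lemma phi_rec (M : ℕ) (δ : ℝ) (hδ : 0 ≤ δ) (m : ℕ) (hm : m + 1 ≤ M - 1) (z : ℝ) :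
    phi M δ (m+1) z = ((M:ℝ) - (m+1))⁻¹ * (phi M δ m z - phi M δ m (z - δ)) := by
  have hM : 2 ≤ M := by omega
  match m with
  | 0 =>
    have hset : {t : Fin 1 → ℝ | ∀ i, t i ∈ Set.Icc (0 : ℝ) δ}
        = (MeasurableEquiv.funUnique (Fin 1) ℝ) ⁻¹' (Set.Icc (0:ℝ) δ) := by
      ext t
      simp [MeasurableEquiv.funUnique, Unique.forall_iff]
    have h := (volume_preserving_funUnique (Fin 1) ℝ).setIntegral_preimage_emb
      (MeasurableEquiv.measurableEmbedding _) (fun x => (z - x) ^ (M - 1 - 1))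
      (Set.Icc (0:ℝ) δ)
    simp only [phi, hset]
    rw [show (∫ t in (MeasurableEquiv.funUnique (Fin 1) ℝ) ⁻¹' (Set.Icc (0:ℝ) δ),
          (z - ∑ i : Fin (0+1), t i) ^ (M - (0+1) - 1) ∂volume)
        = ∫ t in (MeasurableEquiv.funUnique (Fin 1) ℝ) ⁻¹' (Set.Icc (0:ℝ) δ),
          (fun x => (z - x) ^ (M - 1 - 1)) ((MeasurableEquiv.funUnique (Fin 1) ℝ) t) ∂volume
      from setIntegral_congr_fun
        ((MeasurableEquiv.funUnique (Fin 1) ℝ).measurable measurableSet_Icc)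
        (fun t _ => by simp [MeasurableEquiv.funUnique, Fin.sum_univ_one])]
    beta_reduce
    erw [h, int_Icc _ _ _ hδ]
    have h1 : M - 1 - 1 + 1 = M - 1 := by omega
    have h2 : ((M - 1 - 1 : ℕ) : ℝ) + 1 = (M : ℝ) - 1 := by
      rw [show ((M-1-1 : ℕ) : ℝ) + 1 = ((M-1-1+1 : ℕ) : ℝ) by push_cast; ring, h1,
        Nat.cast_sub (by omega)]
      norm_num
    rw [h1, h2, div_eq_inv_mul]
    norm_num
  | (m + 1) =>
    set p := M - (m + 2) - 1 with hp
    have hp1 : p + 1 = M - (m + 2) := by omega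
    have hq : M - (m + 1) - 1 = p + 1 := by omega
    have hcast : ((p : ℝ) + 1) = (M : ℝ) - (m + 2) := by
      rw [show ((p:ℝ) + 1) = ((p+1 : ℕ) : ℝ) by push_cast; ring, hp1,
        Nat.cast_sub (by omega)]
      push_cast; ring
    set S : Set (Fin (m+1) → ℝ) := {t : Fin (m+1) → ℝ | ∀ i, t i ∈ Set.Icc (0 : ℝ) δ}
      with hS
    have hSc : IsCompact S := cube_compact _ _
    have hSm : MeasurableSet S := hSc.measurableSet
    set e := MeasurableEquiv.piFinSuccAbove (fun _ : Fin (m+2) => ℝ) 0 with he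
    have hset : {t : Fin (m+2) → ℝ | ∀ i, t i ∈ Set.Icc (0 : ℝ) δ}
        = e ⁻¹' (Set.Icc (0:ℝ) δ ×ˢ S) := by
      ext t
      simp only [Set.mem_preimage, he, MeasurableEquiv.piFinSuccAbove_apply, Set.mem_prod,
        Set.mem_setOf_eq, hS, Fin.removeNth]
      constructor
      · intro h; exact ⟨h 0, fun j => h _⟩
      · rintro ⟨h0, h1⟩ i
        rcases Fin.eq_zero_or_eq_succ i with rfl | ⟨j, rfl⟩
        · exact h0
        · simpa [Fin.tail] using h1 j
    set g : ℝ × (Fin (m+1) → ℝ) → ℝ :=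
      fun q => (z - q.1 - ∑ j : Fin (m+1), q.2 j) ^ p with hg
    have hgc : Continuous g := by
      apply Continuous.pow
      apply Continuous.sub
      · exact (continuous_const.sub continuous_fst)
      · exact continuous_finset_sum _ (fun j _ => (continuous_apply j).comp continuous_snd)
    have h := (volume_preserving_piFinSuccAbove (fun _ : Fin (m+2) => ℝ) 0).setIntegral_preimage_emb
      (MeasurableEquiv.measurableEmbedding _) g (Set.Icc (0:ℝ) δ ×ˢ S)
    have key : phi M δ (m+2) z = ∫ q in (Set.Icc (0:ℝ) δ ×ˢ S), g q ∂volume := by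
      show (∫ t in {t : Fin (m+2) → ℝ | ∀ i, t i ∈ Set.Icc (0 : ℝ) δ},
        (z - ∑ i, t i) ^ (M - (m + 2) - 1) ∂volume) = _
      rw [hset, ← h]
      refine setIntegral_congr_fun (e.measurable (measurableSet_Icc.prod hSm)) (fun t _ => ?_)
      simp only [hg, he, MeasurableEquiv.piFinSuccAbove_apply, Fin.insertNthEquiv_symm_apply,
        Fin.removeNth, Fin.zero_succAbove, ← hp]
      rw [Fin.sum_univ_succ]
      ring_nf
    have hint : IntegrableOn g (Set.Icc (0:ℝ) δ ×ˢ S) volume :=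
      hgc.continuousOn.integrableOn_compact (isCompact_Icc.prod hSc)
    have hint' : IntegrableOn g (Set.Icc (0:ℝ) δ ×ˢ S) (volume.prod volume) := by
      rwa [← MeasureTheory.Measure.volume_eq_prod]
    rw [key, MeasureTheory.Measure.volume_eq_prod, setIntegral_prod g hint']
    have swap : (∫ x in Set.Icc (0:ℝ) δ, ∫ y in S, g (x, y) ∂volume ∂volume)
        = ∫ y in S, ∫ x in Set.Icc (0:ℝ) δ, g (x, y) ∂volume ∂volume := by
      apply integral_integral_swap
      have : Function.uncurry (fun x y => g (x, y)) = g := rfl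
      rw [this, Measure.prod_restrict]
      exact hint'
    rw [swap]
    -- compute inner integral
    have inner : ∀ y : Fin (m+1) → ℝ,
        (∫ x in Set.Icc (0:ℝ) δ, g (x, y) ∂volume)
          = ((p:ℝ)+1)⁻¹ * ((z - ∑ j, y j) ^ (p+1) - (z - δ - ∑ j, y j) ^ (p+1)) := by
      intro y
      have : ∀ x : ℝ, g (x, y) = ((z - ∑ j, y j) - x) ^ p := by
        intro x; simp only [hg]; ring_nf
      simp_rw [this]
      rw [int_Icc _ _ _ hδ, div_eq_inv_mul]
      ring_nf
    simp_rw [inner]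
    have hA : IntegrableOn (fun y : Fin (m+1) → ℝ => (z - ∑ j, y j) ^ (p+1)) S volume := by
      apply ContinuousOn.integrableOn_compact hSc
      exact (Continuous.continuousOn (by
        exact (continuous_const.sub (continuous_finset_sum _ (fun j _ => continuous_apply j))).pow _))
    have hB : IntegrableOn (fun y : Fin (m+1) → ℝ => (z - δ - ∑ j, y j) ^ (p+1)) S volume := by
      apply ContinuousOn.integrableOn_compact hSc
      exact (Continuous.continuousOn (by
        exact (continuous_const.sub (continuous_finset_sum _ (fun j _ => continuous_apply j))).pow _))
    rw [integral_const_mul, integral_sub hA hB]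
    have hphi1 : phi M δ (m+1) z = ∫ y in S, (z - ∑ j, y j) ^ (p+1) ∂volume := by
      show (∫ t in {t : Fin (m+1) → ℝ | ∀ i, t i ∈ Set.Icc (0:ℝ) δ},
        (z - ∑ i, t i) ^ (M - (m+1) - 1) ∂volume) = _
      rw [hq]
    have hphi2 : phi M δ (m+1) (z - δ) = ∫ y in S, (z - δ - ∑ j, y j) ^ (p+1) ∂volume := by
      show (∫ t in {t : Fin (m+1) → ℝ | ∀ i, t i ∈ Set.Icc (0:ℝ) δ},
        (z - δ - ∑ i, t i) ^ (M - (m+1) - 1) ∂volume) = _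
      rw [hq]
    have hc2 : (M:ℝ) - ((m+1:ℕ) + 1) = (p:ℝ) + 1 := by
      push_cast at hcast ⊢; linarith
    rw [hphi1, hphi2, hc2]

lemma abel_sum (k : ℕ) (f : ℕ → ℝ) :
    ∑ i ∈ range (k+2), (-1:ℝ)^i * ((k+1).choose i : ℝ) * f i
      = ∑ i ∈ range (k+1), (-1:ℝ)^i * (k.choose i : ℝ) * f i
        - ∑ i ∈ range (k+1), (-1:ℝ)^i * (k.choose i : ℝ) * f (i+1) := by
  rw [Finset.sum_range_succ' (fun i => (-1:ℝ)^i * ((k+1).choose i : ℝ) * f i) (k+1)]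
  have hch : ∀ i, (((k+1).choose (i+1) : ℕ) : ℝ) = (k.choose i : ℝ) + (k.choose (i+1) : ℝ) := by
    intro i
    rw [Nat.choose_succ_succ]
    push_cast; ring
  have split : ∀ i, (-1:ℝ)^(i+1) * ((k+1).choose (i+1) : ℝ) * f (i+1)
      = -((-1:ℝ)^i * (k.choose i : ℝ) * f (i+1))
        + (-1:ℝ)^(i+1) * (k.choose (i+1) : ℝ) * f (i+1) := by
    intro i
    rw [hch]
    ring
  rw [Finset.sum_congr rfl (fun i _ => split i), Finset.sum_add_distrib, Finset.sum_neg_distrib]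
  have e1 := Finset.sum_range_succ' (fun i => (-1:ℝ)^i * (k.choose i : ℝ) * f i) (k+1)
  have e2 := Finset.sum_range_succ (fun i => (-1:ℝ)^i * (k.choose i : ℝ) * f i) (k+1)
  have hz : (k.choose (k+1) : ℝ) = 0 := by
    norm_cast
    exact Nat.choose_succ_self k
  simp only [hz] at e2
  simp only [pow_zero, Nat.choose_zero_right, Nat.cast_one] at *
  linarith [e1, e2]

lemma phi_formula (M : ℕ) (δ : ℝ) (hδ : 0 ≤ δ) (z : ℝ) :
    ∀ k n : ℕ, 1 ≤ k → k + 1 ≤ n → n ≤ M - 1 →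
    phi M δ n z = (∏ j ∈ Finset.range k, ((M : ℝ) - n + j))⁻¹ *
      ∑ i ∈ Finset.range (k + 1), (-1) ^ i * (k.choose i : ℝ) * phi M δ (n - k) (z - i * δ) := by
  intro k
  induction k with
  | zero => intro n h; omega
  | succ k ih =>
    intro n _ hkn hnM
    rcases Nat.eq_zero_or_pos k with rfl | hk
    · obtain ⟨m, rfl⟩ : ∃ m, n = m + 1 := ⟨n - 1, by omega⟩
      rw [phi_rec M δ hδ m (by omega) z]
      norm_num [Finset.sum_range_succ, Finset.sum_range_one, Nat.add_sub_cancel]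
      exact Or.inl (by ring)
    · have hrec : ∀ w, phi M δ (n - k) w
          = ((M:ℝ) - n + k)⁻¹ * (phi M δ (n - (k+1)) w - phi M δ (n - (k+1)) (w - δ)) := by
        intro w
        have h1 : n - k = (n - (k+1)) + 1 := by omega
        have h2 := phi_rec M δ hδ (n - (k+1)) (by omega) w
        rw [h1, h2]
        congr 2
        rw [Nat.cast_sub (by omega), Nat.cast_add, Nat.cast_one]
        push_cast
        ring
      rw [ih n hk (by omega) hnM]
      set f : ℕ → ℝ := fun i => phi M δ (n - (k+1)) (z - i * δ) with hf
      have hterm : ∀ i, (-1:ℝ)^i * (k.choose i : ℝ) * phi M δ (n-k) (z - i*δ)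
          = ((M:ℝ) - n + k)⁻¹ *
            ((-1:ℝ)^i * (k.choose i : ℝ) * f i - (-1:ℝ)^i * (k.choose i : ℝ) * f (i+1)) := by
        intro i
        rw [hrec (z - i*δ),
          show z - (i:ℝ)*δ - δ = z - ((i+1 : ℕ):ℝ)*δ from by push_cast; ring]
        simp only [hf]
        ring
      rw [Finset.sum_congr rfl (fun i _ => hterm i), ← Finset.mul_sum,
        Finset.sum_sub_distrib]
      have habel := abel_sum k f
      have hsum : ∑ i ∈ Finset.range (k+1+1),
          (-1:ℝ)^i * ((k+1).choose i : ℝ) * phi M δ (n - (k+1)) (z - i * δ)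
          = (∑ i ∈ Finset.range (k+1), (-1:ℝ)^i * (k.choose i : ℝ) * f i)
            - ∑ i ∈ Finset.range (k+1), (-1:ℝ)^i * (k.choose i : ℝ) * f (i+1) := habel
      rw [hsum, Finset.prod_range_succ, mul_inv]
      ring

/-- The induction formula
`φ_n(1) = [∏_{j=0}^{k−1}(M−n+j)]⁻¹ Σ_{i=0}^{k} (−1)^i C(k,i) φ_{n−k}(1 − iδ)`. -/
theorem phi_induction (M : ℕ) (hM : 2 ≤ M) (δ : ℝ) (hδ0 : 0 < δ)
    (hδ1 : δ < 1 / ((M : ℝ) - 1))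
    (n k : ℕ) (hn2 : 2 ≤ n) (hnM : n ≤ M - 1) (hk1 : 1 ≤ k) (hkn : k ≤ n - 1) :
    phi M δ n 1 = (∏ j ∈ Finset.range k, ((M : ℝ) - n + j))⁻¹ *
      ∑ i ∈ Finset.range (k + 1), (-1) ^ i * (k.choose i : ℝ) * phi M δ (n - k) (1 - i * δ) := by
  have := phi_formula M δ hδ0.le 1 k n hk1 (by omega) hnM
  simpa using this
end

section
/- Suppose 0 < δ < 1/(M−1). For every integer n with 1 ≤ n ≤ M−1, φ_n(1) = ((M−n−1)!/(M−1)!) · Σ_{k=n}^{M-1} C(M−1, k) (−1)^k [ Σ_{i=0}^{n} C(n, i) (−1)^i i^k ] δ^k, where C(a,b) denotes the binomial coefficient. -/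
open MeasureTheory Finset

section Aux

lemma alt_sum_choose (n : ℕ) (hn : 1 ≤ n) :
    ∑ i ∈ range (n + 1), (-1 : ℝ) ^ i * (n.choose i : ℝ) = 0 := by
  have h := add_pow (-1 : ℝ) 1 n
  simp only [one_pow, mul_one, neg_add_cancel] at h
  rw [← h, zero_pow (by omega)]

lemma alt_sum_pow_eq_zero : ∀ n : ℕ, ∀ k : ℕ, k < n →
    ∑ i ∈ range (n + 1), (-1 : ℝ) ^ i * (n.choose i : ℝ) * (i : ℝ) ^ k = 0 := by
  intro n
  induction n with
  | zero => omega
  | succ n ih =>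
    intro k hk
    match k with
    | 0 =>
      simpa using alt_sum_choose (n + 1) (by omega)
    | (k + 1) =>
      have hshift : ∑ i ∈ range (n + 2), (-1 : ℝ) ^ i * ((n+1).choose i : ℝ) * (i : ℝ) ^ (k+1)
          = ∑ j ∈ range (n + 1), (-1 : ℝ) ^ (j+1) * ((n+1).choose (j+1) : ℝ) * ((j:ℝ)+1) ^ (k+1) := by
        rw [Finset.sum_range_succ' _ (n+1)]
        simp [pow_succ]
      rw [hshift]
      have hch : ∀ j : ℕ, (((n+1).choose (j+1) : ℝ)) * ((j:ℝ)+1) = ((n:ℝ)+1) * (n.choose j : ℝ) := by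
        intro j
        have h2 : (n+1).choose (j+1) * (j+1) = (n+1) * n.choose j := (Nat.add_one_mul_choose_eq n j).symm
        exact_mod_cast congrArg (fun m : ℕ => (m : ℝ)) h2
      have step : ∀ j ∈ range (n+1), (-1 : ℝ) ^ (j+1) * ((n+1).choose (j+1) : ℝ) * ((j:ℝ)+1) ^ (k+1)
          = -((n:ℝ)+1) * ((-1:ℝ)^j * (n.choose j : ℝ) * ((j:ℝ)+1)^k) := by
        intro j _
        rw [pow_succ ((j:ℝ)+1) k, show (-1:ℝ)^(j+1) = -(-1:ℝ)^j by ring]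
        calc -(-1:ℝ)^j * ((n+1).choose (j+1) : ℝ) * (((j:ℝ)+1)^k * ((j:ℝ)+1))
            = -(-1:ℝ)^j * (((n+1).choose (j+1) : ℝ) * ((j:ℝ)+1)) * ((j:ℝ)+1)^k := by ring
          _ = -((n:ℝ)+1) * ((-1:ℝ)^j * (n.choose j : ℝ) * ((j:ℝ)+1)^k) := by rw [hch j]; ring
      rw [Finset.sum_congr rfl step, ← Finset.mul_sum]
      have expand : ∀ j ∈ range (n+1), (-1:ℝ)^j * (n.choose j : ℝ) * ((j:ℝ)+1)^k
          = ∑ l ∈ range (k+1), (k.choose l : ℝ) * ((-1:ℝ)^j * (n.choose j : ℝ) * (j:ℝ)^l) := by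
        intro j _
        rw [add_pow (j:ℝ) 1 k]
        rw [Finset.mul_sum]
        refine Finset.sum_congr rfl fun l _ => by ring
      rw [Finset.sum_congr rfl expand, Finset.sum_comm]
      have : ∀ l ∈ range (k+1), ∑ j ∈ range (n+1), (k.choose l : ℝ) * ((-1:ℝ)^j * (n.choose j : ℝ) * (j:ℝ)^l) = 0 := by
        intro l hl
        rw [← Finset.mul_sum, ih l (by simp at hl; omega), mul_zero]
      rw [Finset.sum_congr rfl this]
      simp

lemma alt_telescope (f : ℕ → ℝ) (n : ℕ) :
    ∑ i ∈ range (n + 1), (-1 : ℝ) ^ i * (n.choose i : ℝ) * (f i - f (i + 1))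
      = ∑ i ∈ range (n + 2), (-1 : ℝ) ^ i * ((n + 1).choose i : ℝ) * f i := by
  have h1 : ∑ i ∈ range (n + 1), (-1 : ℝ) ^ i * (n.choose i : ℝ) * (f i - f (i + 1))
      = (∑ i ∈ range (n + 1), (-1 : ℝ) ^ i * (n.choose i : ℝ) * f i)
        - ∑ i ∈ range (n + 1), (-1 : ℝ) ^ i * (n.choose i : ℝ) * f (i + 1) := by
    rw [← Finset.sum_sub_distrib]; exact Finset.sum_congr rfl fun i _ => by ring
  rw [h1]
  rw [show ∑ i ∈ range (n + 2), (-1 : ℝ) ^ i * ((n + 1).choose i : ℝ) * f i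
      = ∑ i ∈ range (n + 1), (-1 : ℝ) ^ (i+1) * ((n + 1).choose (i+1) : ℝ) * f (i+1)
        + (-1:ℝ)^0 * ((n+1).choose 0 : ℝ) * f 0 from Finset.sum_range_succ' _ (n+1)]
  have key : ∀ i ∈ range (n+1), (-1 : ℝ) ^ (i+1) * ((n + 1).choose (i+1) : ℝ) * f (i+1)
      = (-1:ℝ)^(i+1) * (n.choose (i+1) : ℝ) * f (i+1) - (-1:ℝ)^i * (n.choose i : ℝ) * f (i+1) := by
    intro i _
    rw [Nat.choose_succ_succ]
    push_cast
    ring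
  rw [Finset.sum_congr rfl key, Finset.sum_sub_distrib]
  have h2 : ∑ i ∈ range (n + 1), (-1 : ℝ) ^ (i+1) * (n.choose (i+1) : ℝ) * f (i+1)
      = (∑ i ∈ range (n + 1), (-1 : ℝ) ^ i * (n.choose i : ℝ) * f i) - (-1:ℝ)^0 * (n.choose 0:ℝ) * f 0
        + (-1:ℝ)^(n+1) * (n.choose (n+1) : ℝ) * f (n+1) := by
    have a1 := Finset.sum_range_succ' (fun i => (-1 : ℝ) ^ i * (n.choose i : ℝ) * f i) (n+1)
    have a2 := Finset.sum_range_succ (fun i => (-1 : ℝ) ^ i * (n.choose i : ℝ) * f i) (n+1)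
    rw [a2] at a1
    linarith
  rw [h2, Nat.choose_succ_self]
  simp
  ring

lemma cube_eq_pi (δ : ℝ) (n : ℕ) :
    {t : Fin n → ℝ | ∀ i, t i ∈ Set.Icc (0 : ℝ) δ} = Set.pi Set.univ (fun _ => Set.Icc (0:ℝ) δ) := by
  ext t; simp only [Set.mem_setOf_eq, Set.mem_pi, Set.mem_univ, true_implies]

lemma restrict_pi_Icc (δ : ℝ) (n : ℕ) :
    (volume : Measure (Fin n → ℝ)).restrict (Set.pi Set.univ (fun _ => Set.Icc (0:ℝ) δ))
      = Measure.pi (fun _ : Fin n => (volume : Measure ℝ).restrict (Set.Icc (0:ℝ) δ)) := by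
  refine (Measure.pi_eq fun s hs => ?_).symm
  rw [Measure.restrict_apply (MeasurableSet.univ_pi hs)]
  rw [show Set.pi Set.univ s ∩ Set.pi Set.univ (fun _ => Set.Icc (0:ℝ) δ)
      = Set.pi Set.univ (fun i => s i ∩ Set.Icc (0:ℝ) δ) by rw [← Set.pi_inter_distrib]]
  rw [show (volume : Measure (Fin n → ℝ)) = Measure.pi fun _ => volume from rfl, Measure.pi_pi]
  exact Finset.prod_congr rfl fun i _ => (Measure.restrict_apply (hs i)).symm

lemma cube_succ_integral (δ : ℝ) (n : ℕ) (f : ℝ → ℝ) (hf : Continuous f) :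
    ∫ t in {t : Fin (n+1) → ℝ | ∀ i, t i ∈ Set.Icc (0 : ℝ) δ}, f (∑ i, t i)
      = ∫ s in Set.Icc (0:ℝ) δ, ∫ t in {t : Fin n → ℝ | ∀ i, t i ∈ Set.Icc (0 : ℝ) δ},
          f (s + ∑ i, t i) := by
  rw [cube_eq_pi, restrict_pi_Icc]
  set e := MeasurableEquiv.piFinSuccAbove (fun _ : Fin (n+1) => ℝ) 0 with he
  set G : ℝ × (Fin n → ℝ) → ℝ := fun p => f (p.1 + ∑ i, p.2 i) with hG
  have hmp := MeasureTheory.measurePreserving_piFinSuccAbove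
    (fun _ : Fin (n+1) => (volume : Measure ℝ).restrict (Set.Icc (0:ℝ) δ)) 0
  have hGe : ∀ t : Fin (n+1) → ℝ, G (e t) = f (∑ i, t i) := by
    intro t
    simp only [hG, he, MeasurableEquiv.piFinSuccAbove_apply, Fin.insertNthEquiv,
      Equiv.coe_fn_symm_mk, Fin.removeNth]
    congr 1
    rw [Fin.sum_univ_succ]
    simp [Fin.succAbove, Fin.tail]
  have hGc : Continuous G := by
    apply hf.comp
    exact continuous_fst.add (continuous_finset_sum _ fun i _ => (continuous_apply i).comp continuous_snd)
  have hint : Integrable G (((volume : Measure ℝ).restrict (Set.Icc (0:ℝ) δ)).prod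
      (Measure.pi fun _ : Fin n => (volume : Measure ℝ).restrict (Set.Icc (0:ℝ) δ))) := by
    rw [← restrict_pi_Icc, Measure.prod_restrict]
    refine (hGc.continuousOn).integrableOn_compact ?_
    exact isCompact_Icc.prod (isCompact_univ_pi fun _ => isCompact_Icc)
  calc (∫ t : Fin (n+1) → ℝ, f (∑ i, t i)
          ∂Measure.pi fun _ => (volume : Measure ℝ).restrict (Set.Icc (0:ℝ) δ))
      = ∫ t : Fin (n+1) → ℝ, G (e t)
          ∂Measure.pi fun _ => (volume : Measure ℝ).restrict (Set.Icc (0:ℝ) δ) := by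
        exact (integral_congr_ae (Filter.Eventually.of_forall fun t => (hGe t).symm))
    _ = ∫ p, G p ∂(((volume : Measure ℝ).restrict (Set.Icc (0:ℝ) δ)).prod
          (Measure.pi fun _ : Fin n => (volume : Measure ℝ).restrict (Set.Icc (0:ℝ) δ))) :=
        hmp.integral_comp e.measurableEmbedding G
    _ = ∫ s, ∫ t, G (s, t)
          ∂(Measure.pi fun _ : Fin n => (volume : Measure ℝ).restrict (Set.Icc (0:ℝ) δ))
          ∂((volume : Measure ℝ).restrict (Set.Icc (0:ℝ) δ)) := integral_prod G hint
    _ = _ := by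
        refine integral_congr_ae (Filter.Eventually.of_forall fun s => ?_)
        rw [cube_eq_pi, restrict_pi_Icc]
lemma I_closed (δ : ℝ) (hδ : 0 ≤ δ) (m : ℕ) : ∀ (n : ℕ) (z : ℝ),
    (∫ t in {t : Fin n → ℝ | ∀ i, t i ∈ Set.Icc (0 : ℝ) δ}, (z - ∑ i, t i) ^ m)
      = (m.factorial : ℝ) / ((m + n).factorial : ℝ) *
        ∑ i ∈ range (n + 1), (-1 : ℝ) ^ i * (n.choose i : ℝ) * (z - (i : ℝ) * δ) ^ (m + n) := by
  intro n
  induction n with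
  | zero =>
    intro z
    have hset : {t : Fin 0 → ℝ | ∀ i, t i ∈ Set.Icc (0 : ℝ) δ} = Set.univ := by
      ext t; simp
    rw [hset, Measure.restrict_univ]
    simp only [Finset.univ_eq_empty, Finset.sum_empty, sub_zero]
    rw [integral_const]
    have : (volume : Measure (Fin 0 → ℝ)) Set.univ = 1 := by
      rw [show (volume : Measure (Fin 0 → ℝ)) = Measure.pi fun _ => volume from rfl,
        Measure.pi_univ]
      simp
    rw [measureReal_def, this]
    have hf : (m.factorial : ℝ) ≠ 0 := by positivity
    simp [hf]
  | succ n ih =>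
    intro z
    have hstep : (∫ t in {t : Fin (n+1) → ℝ | ∀ i, t i ∈ Set.Icc (0 : ℝ) δ}, (z - ∑ i, t i) ^ m)
        = ∫ s in Set.Icc (0:ℝ) δ, ∫ t in {t : Fin n → ℝ | ∀ i, t i ∈ Set.Icc (0 : ℝ) δ},
            ((z - s) - ∑ i, t i) ^ m := by
      have := cube_succ_integral δ n (fun u => (z - u) ^ m) (by fun_prop)
      simp only [sub_add_eq_sub_sub] at this
      exact this
    rw [hstep]
    have hinner : ∀ s : ℝ, (∫ t in {t : Fin n → ℝ | ∀ i, t i ∈ Set.Icc (0 : ℝ) δ},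
        ((z - s) - ∑ i, t i) ^ m)
        = (m.factorial : ℝ) / ((m + n).factorial : ℝ) *
          ∑ i ∈ range (n + 1), (-1 : ℝ) ^ i * (n.choose i : ℝ) * ((z - s) - (i:ℝ) * δ) ^ (m + n) :=
      fun s => ih (z - s)
    rw [integral_congr_ae (Filter.Eventually.of_forall fun s => hinner s)]
    rw [MeasureTheory.integral_Icc_eq_integral_Ioc,
      ← intervalIntegral.integral_of_le hδ]
    rw [intervalIntegral.integral_const_mul]
    rw [intervalIntegral.integral_finset_sum (fun i _ => by
      apply Continuous.intervalIntegrable; fun_prop)]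
    have hterm : ∀ i ∈ range (n+1),
        (∫ s in (0:ℝ)..δ, (-1 : ℝ) ^ i * (n.choose i : ℝ) * ((z - s) - (i:ℝ) * δ) ^ (m + n))
        = (-1 : ℝ) ^ i * (n.choose i : ℝ) *
          (((z - (i:ℝ)*δ) ^ (m+n+1) - (z - ((i:ℝ)+1)*δ) ^ (m+n+1)) / ((m:ℝ)+n+1)) := by
      intro i _
      rw [intervalIntegral.integral_const_mul]
      congr 1
      have : ∀ s : ℝ, (z - s) - (i:ℝ) * δ = (z - (i:ℝ)*δ) - s := fun s => by ring
      simp only [this]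
      rw [intervalIntegral.integral_comp_sub_left (fun u => u ^ (m+n)) (z - (i:ℝ)*δ)]
      rw [integral_pow]
      push_cast
      ring_nf
    rw [Finset.sum_congr rfl hterm]
    have htel := alt_telescope (fun i => (z - (i:ℝ) * δ) ^ (m+n+1)) n
    have hre : ∀ i ∈ range (n+1),
        (-1 : ℝ) ^ i * (n.choose i : ℝ) *
          (((z - (i:ℝ)*δ) ^ (m+n+1) - (z - ((i:ℝ)+1)*δ) ^ (m+n+1)) / ((m:ℝ)+n+1))
        = (1 / ((m:ℝ)+n+1)) * ((-1:ℝ)^i * (n.choose i : ℝ) *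
            ((z - (i:ℝ)*δ)^(m+n+1) - (z - ((i:ℝ)+1)*δ)^(m+n+1))) := fun i _ => by ring
    rw [Finset.sum_congr rfl hre, ← Finset.mul_sum]
    push_cast at htel
    rw [htel, show m + (n+1) = m + n + 1 by ring, ← mul_assoc]
    congr 1
    have hfac : ((m+n+1).factorial : ℝ) = ((m+n).factorial : ℝ) * ((m:ℝ)+n+1) := by
      rw [show m + n + 1 = (m+n)+1 by ring, Nat.factorial_succ]
      push_cast; ring
    have h1 : ((m+n).factorial : ℝ) ≠ 0 := by positivity
    have h2 : ((m:ℝ)+n+1) ≠ 0 := by positivity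
    rw [hfac]
    field_simp

end Aux

/-- Closed form:
`φ_n(1) = ((M−n−1)!/(M−1)!) Σ_{k=n}^{M−1} C(M−1,k)(−1)^k [Σ_{i=0}^{n} C(n,i)(−1)^i i^k] δ^k`. -/
theorem phi_closed_form (M : ℕ) (hM : 2 ≤ M) (δ : ℝ) (hδ0 : 0 < δ)
    (hδ1 : δ < 1 / ((M : ℝ) - 1))
    (n : ℕ) (hn1 : 1 ≤ n) (hnM : n ≤ M - 1) :
    phi M δ n 1 = ((Nat.factorial (M - n - 1) : ℝ) / (Nat.factorial (M - 1) : ℝ)) *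
      ∑ k ∈ Finset.Icc n (M - 1), ((M - 1).choose k : ℝ) * (-1) ^ k *
        (∑ i ∈ Finset.range (n + 1), (n.choose i : ℝ) * (-1) ^ i * (i : ℝ) ^ k) * δ ^ k := by
  obtain ⟨n', rfl⟩ : ∃ n', n = n' + 1 := ⟨n - 1, by omega⟩
  set n := n' + 1 with hn
  rw [phi]
  rw [I_closed δ hδ0.le (M - n - 1) n 1]
  have hM1 : M - n - 1 + n = M - 1 := by omega
  rw [hM1]
  congr 1
  have hexp : ∀ i : ℕ, ((1:ℝ) - (i:ℝ) * δ) ^ (M-1)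
      = ∑ k ∈ range (M-1+1), ((M-1).choose k : ℝ) * ((-1:ℝ))^k * (i:ℝ)^k * δ^k := by
    intro i
    have h := add_pow (-((i:ℝ) * δ)) 1 (M-1)
    simp only [one_pow, mul_one] at h
    rw [show (1:ℝ) - (i:ℝ)*δ = -((i:ℝ)*δ) + 1 by ring, h]
    refine Finset.sum_congr rfl fun k _ => ?_
    rw [neg_pow, mul_pow]
    ring
  calc ∑ i ∈ range (n+1), (-1:ℝ)^i * (n.choose i : ℝ) * ((1:ℝ) - (i:ℝ)*δ) ^ (M-1)
      = ∑ i ∈ range (n+1), ∑ k ∈ range (M-1+1),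
          (-1:ℝ)^i * (n.choose i : ℝ) * (((M-1).choose k : ℝ) * ((-1:ℝ))^k * (i:ℝ)^k * δ^k) := by
        refine Finset.sum_congr rfl fun i _ => ?_
        rw [hexp i, Finset.mul_sum]
    _ = ∑ k ∈ range (M-1+1), ∑ i ∈ range (n+1),
          (-1:ℝ)^i * (n.choose i : ℝ) * (((M-1).choose k : ℝ) * ((-1:ℝ))^k * (i:ℝ)^k * δ^k) :=
        Finset.sum_comm
    _ = ∑ k ∈ range (M-1+1), ((M-1).choose k : ℝ) * (-1)^k *
          (∑ i ∈ range (n+1), (n.choose i : ℝ) * (-1)^i * (i:ℝ)^k) * δ^k := by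
        refine Finset.sum_congr rfl fun k _ => ?_
        rw [Finset.mul_sum, Finset.sum_mul]
        refine Finset.sum_congr rfl fun i _ => ?_
        ring
    _ = ∑ k ∈ Finset.Icc n (M-1), ((M-1).choose k : ℝ) * (-1)^k *
          (∑ i ∈ range (n+1), (n.choose i : ℝ) * (-1)^i * (i:ℝ)^k) * δ^k := by
        symm
        refine Finset.sum_subset ?_ ?_
        · intro k hk
          simp only [Finset.mem_Icc] at hk
          simp only [Finset.mem_range]
          omega
        · intro k hk hnk
          simp only [Finset.mem_range] at hk
          simp only [Finset.mem_Icc] at hnk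
          have hkn : k < n := by omega
          have hz : ∑ i ∈ range (n+1), (n.choose i : ℝ) * (-1)^i * (i:ℝ)^k = 0 := by
            rw [← alt_sum_pow_eq_zero n k hkn]
            exact Finset.sum_congr rfl fun i _ => by ring
          rw [hz]
          ring
end
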